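/- arXiv:2503.07966 — 7 statements merged into one kernel-verified Lean document; each statement's English description precedes it below -/
import Mathlib

section
/- Let X ∈ ℝ^{n×p} with n ≤ p have full row rank, and let ŷ ∈ {-1,1}^n. Define w_MNI as the minimum Euclidean norm solution of Xw = ŷ, and define w̃_MNI as the minimum Euclidean norm element of the affine span of the columns of Xᵀ·diag(ŷ) (i.e., w̃ = Xᵀ diag(ŷ) α where α minimizes ‖Xᵀ diag(ŷ) α‖ subject to αᵀ𝟙 = 1). Then w_MNI = w̃_MNI / ‖w̃_MNI‖² and w̃_MNI = w_MNI / ‖w_MNI‖². In particular, the two vectors have the same direction. -/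
open Matrix
/-- Euclidean norm of a vector in `Fin p → ℝ`. -/
noncomputable def euclNorm {p : ℕ} (v : Fin p → ℝ) : ℝ :=
  Real.sqrt (∑ i, v i ^ 2)

lemma dotM {n p : ℕ} (X : Matrix (Fin n) (Fin p) ℝ) (yh : Fin n → ℝ)
    (w : Fin p → ℝ) (β : Fin n → ℝ) :
    ∑ j, w j * ((Xᵀ * Matrix.diagonal yh).mulVec β) j
      = ∑ i, β i * (yh i * (X.mulVec w) i) := by
  simp only [mulVec, dotProduct, mul_apply, transpose_apply, Matrix.diagonal,
    Matrix.of_apply, Finset.mul_sum, Finset.sum_mul]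
  rw [Finset.sum_comm]
  refine Finset.sum_congr rfl fun i _ => ?_
  simp [Finset.sum_ite_eq, Finset.mul_sum]
  exact Finset.sum_congr rfl fun j _ => by ring

lemma euclNorm_sq {p : ℕ} (v : Fin p → ℝ) : euclNorm v ^ 2 = ∑ i, v i ^ 2 :=
  Real.sq_sqrt (by positivity)

theorem stmt_0 {n p : ℕ} (hnp : n ≤ p)
    (X : Matrix (Fin n) (Fin p) ℝ) (hX : X.rank = n)
    (yh : Fin n → ℝ) (hyh : ∀ i, yh i = 1 ∨ yh i = -1)
    (wMNI wT : Fin p → ℝ)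
    -- `wMNI` is the minimum Euclidean norm solution of `X w = yh`
    (hw_int : X.mulVec wMNI = yh)
    (hw_min : ∀ w : Fin p → ℝ, X.mulVec w = yh → euclNorm wMNI ≤ euclNorm w)
    -- `wT` is the minimum norm element of the affine span of the columns of `Xᵀ ⬝ diag yh`
    (α : Fin n → ℝ) (hα : ∑ i, α i = 1)
    (hwT : wT = (Xᵀ * Matrix.diagonal yh).mulVec α)
    (hwT_min : ∀ β : Fin n → ℝ, ∑ i, β i = 1 →
        euclNorm wT ≤ euclNorm ((Xᵀ * Matrix.diagonal yh).mulVec β)) :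
    wMNI = (euclNorm wT ^ 2)⁻¹ • wT ∧ wT = (euclNorm wMNI ^ 2)⁻¹ • wMNI := by
  set M := Xᵀ * Matrix.diagonal yh with hM
  have hyh2 : ∀ i, yh i * yh i = 1 := fun i => by rcases hyh i with h | h <;> rw [h] <;> ring
  have hdot1 : ∑ j, wMNI j * wT j = 1 := by
    rw [hwT, dotM, hw_int]
    calc ∑ i, α i * (yh i * yh i) = ∑ i, α i := by
          refine Finset.sum_congr rfl fun i _ => by rw [hyh2 i, mul_one]
      _ = 1 := hα
  set s := ∑ j, wT j ^ 2 with hs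
  have hs0 : 0 ≤ s := by positivity
  have hspos : 0 < s := by
    rcases lt_or_eq_of_le hs0 with h | h
    · exact h
    · exfalso
      have hz : ∀ j, wT j = 0 := by
        intro j
        have := Finset.sum_eq_zero_iff_of_nonneg (fun i _ => sq_nonneg (wT i)) |>.mp h.symm j (Finset.mem_univ j)
        exact pow_eq_zero_iff (by norm_num) |>.mp this
      simp [hz] at hdot1
  have hopt : ∀ i : Fin n, ∑ j, wT j * (M.mulVec (Pi.single i 1)) j = s := by
    intro i
    set c := M.mulVec (Pi.single i 1) with hc
    set d : Fin p → ℝ := fun j => c j - wT j with hd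
    set b := ∑ j, wT j * d j with hb
    set a := ∑ j, d j ^ 2 with ha
    have ha0 : 0 ≤ a := by positivity
    have hineq : ∀ t : ℝ, 0 ≤ 2 * t * b + t ^ 2 * a := by
      intro t
      have hβ : ∑ k, (α k + t * ((Pi.single i 1 : Fin n → ℝ) k - α k)) = 1 := by
        have hone : ∑ k, (Pi.single i 1 : Fin n → ℝ) k = 1 := by
          simp [Finset.sum_pi_single]
        simp only [mul_sub]
        rw [Finset.sum_add_distrib, Finset.sum_sub_distrib, ← Finset.mul_sum,
          ← Finset.mul_sum, hα, hone]
        ring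
      have hmv : M.mulVec (fun k => α k + t * ((Pi.single i 1 : Fin n → ℝ) k - α k))
          = fun j => wT j + t * d j := by
        funext j
        have heq2 : (fun k => α k + t * ((Pi.single i 1 : Fin n → ℝ) k - α k))
            = α + t • ((Pi.single i 1 : Fin n → ℝ) - α) := by
          funext k; simp [Pi.smul_apply]
        rw [heq2, mulVec_add, mulVec_smul, mulVec_sub]
        simp [hd, hc, hwT]
      have h1 := hwT_min _ hβ
      rw [hmv] at h1
      have h2 : s ≤ ∑ j, (wT j + t * d j) ^ 2 := by
        have hnn : (0:ℝ) ≤ euclNorm wT := Real.sqrt_nonneg _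
        have := mul_self_le_mul_self hnn h1
        simpa only [← pow_two, euclNorm_sq] using this
      have hexp : ∑ j, (wT j + t * d j) ^ 2 = s + 2 * t * b + t ^ 2 * a := by
        simp only [hs, hb, ha, Finset.mul_sum, ← Finset.sum_add_distrib]
        exact Finset.sum_congr rfl fun j _ => by ring
      linarith [hexp ▸ h2]
    have hb0 : b = 0 := by
      have hap : (0:ℝ) < a + 1 := by linarith
      have h1 := hineq (-b / (a + 1))
      have h2 : 0 ≤ (2 * (-b / (a + 1)) * b + (-b / (a + 1)) ^ 2 * a) * (a + 1) ^ 2 :=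
        mul_nonneg h1 (by positivity)
      have h3 : (2 * (-b / (a + 1)) * b + (-b / (a + 1)) ^ 2 * a) * (a + 1) ^ 2
          = -(b ^ 2) * (a + 2) := by
        field_simp
        ring
      rw [h3] at h2
      nlinarith [sq_nonneg b]
    have hb' : b = ∑ j, wT j * c j - s := by
      rw [hb, hs, ← Finset.sum_sub_distrib]
      exact Finset.sum_congr rfl fun j _ => by ring
    linarith [hb' ▸ hb0]
  have hXwT : ∀ i, (X.mulVec wT) i = s * yh i := by
    intro i
    have h := hopt i
    rw [dotM] at h
    have h2 : yh i * (X.mulVec wT) i = s := by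
      simpa [Finset.sum_pi_single, Pi.single_apply] using h
    have h3 := congrArg (fun x => yh i * x) h2
    rw [← mul_assoc, hyh2 i, one_mul] at h3
    rw [h3]; ring
  have hu : X.mulVec (s⁻¹ • wT) = yh := by
    funext i
    rw [mulVec_smul]
    simp only [Pi.smul_apply, smul_eq_mul, hXwT i]
    field_simp
  have hmin := hw_min _ hu
  set m := ∑ j, wMNI j ^ 2 with hm
  have hm0 : 0 ≤ m := by positivity
  have husq : ∑ j, (s⁻¹ • wT) j ^ 2 = s⁻¹ := by
    simp only [Pi.smul_apply, smul_eq_mul, mul_pow, ← Finset.mul_sum, ← hs]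
    rw [pow_two]
    field_simp
  have hmsinv : m ≤ s⁻¹ := by
    have hnn : (0:ℝ) ≤ euclNorm wMNI := Real.sqrt_nonneg _
    have := mul_self_le_mul_self hnn hmin
    rw [← pow_two, ← pow_two, euclNorm_sq, euclNorm_sq, husq] at this
    exact this
  have hdiff : ∑ j, (wMNI j - s⁻¹ * wT j) ^ 2 = m - s⁻¹ := by
    have h4 : ∑ j, (wMNI j - s⁻¹ * wT j) ^ 2
        = m - 2 * s⁻¹ * (∑ j, wMNI j * wT j) + s⁻¹ ^ 2 * s := by
      rw [hm, Finset.mul_sum, ← Finset.sum_sub_distrib]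
      rw [hs, Finset.mul_sum, ← Finset.sum_add_distrib]
      exact Finset.sum_congr rfl fun j _ => by ring
    rw [h4, hdot1, pow_two]
    field_simp
    ring
  have hdiff0 : ∑ j, (wMNI j - s⁻¹ * wT j) ^ 2 = 0 := by
    have h1 : (0:ℝ) ≤ ∑ j, (wMNI j - s⁻¹ * wT j) ^ 2 := by positivity
    linarith [hdiff ▸ h1, hdiff]
  have heq : ∀ j, wMNI j = s⁻¹ * wT j := by
    intro j
    have h5 := Finset.sum_eq_zero_iff_of_nonneg
      (fun i _ => sq_nonneg (wMNI i - s⁻¹ * wT i)) |>.mp hdiff0 j (Finset.mem_univ j)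
    have h6 := pow_eq_zero_iff (n := 2) (by norm_num) |>.mp h5
    linarith
  have hm_eq : m = s⁻¹ := by
    have := hdiff ▸ hdiff0
    linarith
  constructor
  · funext j
    rw [euclNorm_sq]
    simp only [Pi.smul_apply, smul_eq_mul, ← hs]
    exact heq j
  · funext j
    rw [euclNorm_sq]
    simp only [Pi.smul_apply, smul_eq_mul, ← hm]
    rw [hm_eq, inv_inv, heq j]
    field_simp
end

section
/- Let Σ ∈ ℝ^{k×k} be a positive definite diagonal matrix and M ∈ ℝ^{k×k} a symmetric matrix with αI_k ⪯ M ⪯ βI_k for scalars 0 < α < β. Then for any vector u ∈ ℝ^k: (a) ‖(Σ⁻¹ + M)⁻¹ u‖ ≥ β⁻¹ ‖(α⁻¹Σ⁻¹ + I_k)⁻¹ u‖; (b) ‖(Σ⁻¹ + M)⁻¹ u‖ ≤ α⁻¹ ‖(β⁻¹Σ⁻¹ + I_k)⁻¹ u‖; (c) β⁻² tr((α⁻¹Σ⁻¹ + I_k)⁻²) ≤ tr((Σ⁻¹ + M)⁻²) ≤ α⁻² tr((β⁻¹Σ⁻¹ + I_k)⁻²). -/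
open Matrix

noncomputable def nrm {k : ℕ} (v : Fin k → ℝ) : ℝ := Real.sqrt (∑ i, v i ^ 2)

lemma nrm_eq_norm {k : ℕ} (v : Fin k → ℝ) :
    nrm v = ‖(WithLp.equiv 2 (Fin k → ℝ)).symm v‖ := by
  rw [EuclideanSpace.norm_eq, nrm]
  congr 1
  refine Finset.sum_congr rfl fun i _ => ?_
  rw [WithLp.equiv_symm_apply, WithLp.ofLp_toLp, Real.norm_eq_abs, sq_abs]

lemma nrm_nonneg {k : ℕ} (v : Fin k → ℝ) : 0 ≤ nrm v := Real.sqrt_nonneg _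

lemma nrm_sq {k : ℕ} (v : Fin k → ℝ) : nrm v ^ 2 = ∑ i, v i ^ 2 :=
  Real.sq_sqrt (Finset.sum_nonneg fun i _ => sq_nonneg _)

lemma nrm_add_le {k : ℕ} (v w : Fin k → ℝ) : nrm (v + w) ≤ nrm v + nrm w := by
  simp only [nrm_eq_norm]
  rw [WithLp.equiv_symm_apply, WithLp.toLp_add]  -- maybe name
  exact norm_add_le _ _

lemma nrm_smul {k : ℕ} (c : ℝ) (hc : 0 ≤ c) (v : Fin k → ℝ) : nrm (c • v) = c * nrm v := by
  simp only [nrm_eq_norm]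
  rw [WithLp.equiv_symm_apply, WithLp.toLp_smul, norm_smul, Real.norm_eq_abs, abs_of_nonneg hc]

lemma dp_symm {k : ℕ} {R : Matrix (Fin k) (Fin k) ℝ} (hR : Rᵀ = R) (x y : Fin k → ℝ) :
    x ⬝ᵥ R *ᵥ y = y ⬝ᵥ R *ᵥ x := by
  rw [dotProduct_mulVec, ← mulVec_transpose, hR, dotProduct_comm]

lemma psd_nonneg {k : ℕ} {R : Matrix (Fin k) (Fin k) ℝ} (hR : R.PosSemidef) (x : Fin k → ℝ) :
    0 ≤ x ⬝ᵥ R *ᵥ x := by simpa using (posSemidef_iff_dotProduct_mulVec.mp hR).2 x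

lemma psd_cs {k : ℕ} {R : Matrix (Fin k) (Fin k) ℝ} (hR : R.PosSemidef) (x y : Fin k → ℝ) :
    (x ⬝ᵥ R *ᵥ y) ^ 2 ≤ (x ⬝ᵥ R *ᵥ x) * (y ⬝ᵥ R *ᵥ y) := by
  have hsym : Rᵀ = R := hR.isHermitian
  have key : ∀ t : ℝ, 0 ≤ (y ⬝ᵥ R *ᵥ y) * (t * t) + (2 * (x ⬝ᵥ R *ᵥ y)) * t + x ⬝ᵥ R *ᵥ x := by
    intro t
    have h := psd_nonneg hR (x + t • y)
    have e1 : x ⬝ᵥ R *ᵥ (t • y) = t * (x ⬝ᵥ R *ᵥ y) := by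
      rw [mulVec_smul, dotProduct_smul, smul_eq_mul]
    have e2 : (t • y) ⬝ᵥ R *ᵥ x = t * (x ⬝ᵥ R *ᵥ y) := by
      rw [smul_dotProduct, dp_symm hsym y x, smul_eq_mul]
    have e3 : (t • y) ⬝ᵥ R *ᵥ (t • y) = t * t * (y ⬝ᵥ R *ᵥ y) := by
      rw [mulVec_smul, dotProduct_smul, smul_dotProduct, smul_eq_mul, smul_eq_mul]; ring
    calc (0:ℝ) ≤ (x + t • y) ⬝ᵥ R *ᵥ (x + t • y) := h
    _ = (y ⬝ᵥ R *ᵥ y) * (t * t) + (2 * (x ⬝ᵥ R *ᵥ y)) * t + x ⬝ᵥ R *ᵥ x := by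
        rw [mulVec_add, add_dotProduct, dotProduct_add, dotProduct_add, e1, e2, e3]; ring
  have := discrim_le_zero key
  rw [discrim] at this
  nlinarith [this]

lemma psd_vec_bound {k : ℕ} {R : Matrix (Fin k) (Fin k) ℝ} {γ : ℝ} (hγ : 0 ≤ γ)
    (hR : R.PosSemidef) (hRγ : (γ • (1 : Matrix (Fin k) (Fin k) ℝ) - R).PosSemidef)
    (z : Fin k → ℝ) : nrm (R *ᵥ z) ≤ γ * nrm z := by
  have hsym : Rᵀ = R := hR.isHermitian
  have hub : ∀ x : Fin k → ℝ, x ⬝ᵥ R *ᵥ x ≤ γ * (x ⬝ᵥ x) := by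
    intro x
    have h := psd_nonneg hRγ x
    rw [sub_mulVec, dotProduct_sub, smul_mulVec, one_mulVec, dotProduct_smul] at h
    simpa [smul_eq_mul] using sub_nonneg.mp h
  have hds : ∀ v : Fin k → ℝ, v ⬝ᵥ v = nrm v ^ 2 := by
    intro v; rw [nrm_sq, dotProduct]; simp [sq]
  set w := R *ᵥ z with hw
  have hn : z ⬝ᵥ R *ᵥ w = w ⬝ᵥ w := dp_symm hsym z w
  have hcs := psd_cs hR z w
  have ht := hub w
  have hs := hub z
  have hsnn := psd_nonneg hR z
  have htnn := psd_nonneg hR w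
  have hnnn : (0:ℝ) ≤ w ⬝ᵥ w := by rw [hds]; positivity
  have hzz : (0:ℝ) ≤ z ⬝ᵥ z := by rw [hds]; positivity
  rw [hn] at hcs
  have key : w ⬝ᵥ w ≤ γ ^ 2 * (z ⬝ᵥ z) := by
    rcases eq_or_lt_of_le hnnn with h0 | h0
    · rw [← h0]; exact mul_nonneg (sq_nonneg γ) hzz
    · nlinarith [mul_le_mul hs ht htnn (mul_nonneg hγ hzz), h0]
  rw [hds, hds] at key
  have h2 : nrm w ^ 2 ≤ (γ * nrm z) ^ 2 := by rw [mul_pow]; nlinarith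
  calc nrm w = Real.sqrt (nrm w ^ 2) := (Real.sqrt_sq (nrm_nonneg _)).symm
  _ ≤ Real.sqrt ((γ * nrm z) ^ 2) := Real.sqrt_le_sqrt h2
  _ = γ * nrm z := Real.sqrt_sq (mul_nonneg hγ (nrm_nonneg _))

lemma nrm_diag_le {k : ℕ} {g : Fin k → ℝ} {c : ℝ} (hc : 0 ≤ c)
    (hg : ∀ i, 0 ≤ g i) (hgc : ∀ i, g i ≤ c) (v : Fin k → ℝ) :
    nrm (Matrix.diagonal g *ᵥ v) ≤ c * nrm v := by
  have h1 : nrm (Matrix.diagonal g *ᵥ v) = Real.sqrt (∑ i, (g i * v i) ^ 2) := by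
    rw [nrm]; congr 1; exact Finset.sum_congr rfl fun i _ => by rw [mulVec_diagonal]
  rw [h1, nrm]
  calc Real.sqrt (∑ i, (g i * v i) ^ 2) ≤ Real.sqrt (∑ i, c ^ 2 * v i ^ 2) := by
        apply Real.sqrt_le_sqrt
        refine Finset.sum_le_sum fun i _ => ?_
        rw [mul_pow]
        exact mul_le_mul_of_nonneg_right (pow_le_pow_left₀ (hg i) (hgc i) 2) (sq_nonneg _)
  _ = c * Real.sqrt (∑ i, v i ^ 2) := by
        rw [← Finset.mul_sum, Real.sqrt_mul (sq_nonneg c), Real.sqrt_sq hc]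

lemma trace_sq_eq {k : ℕ} (X : Matrix (Fin k) (Fin k) ℝ) (hX : ∀ i j, X i j = X j i) :
    Matrix.trace (X ^ 2) = ∑ i, nrm (X *ᵥ Pi.single i 1) ^ 2 := by
  rw [pow_two, Matrix.trace]
  refine Finset.sum_congr rfl fun i _ => ?_
  rw [nrm_sq, Matrix.diag, Matrix.mul_apply]
  refine Finset.sum_congr rfl fun j _ => ?_
  simp only [mulVec_single, MulOpposite.op_one, one_smul, Matrix.col_apply, mul_one]
  rw [hX i j, sq]


theorem stmt_2 {k : ℕ} (d : Fin k → ℝ) (hd : ∀ i, 0 < d i)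
    (M : Matrix (Fin k) (Fin k) ℝ) (hM : M.IsSymm)
    (a b : ℝ) (ha : 0 < a) (hab : a < b)
    (hMa : (M - a • (1 : Matrix (Fin k) (Fin k) ℝ)).PosSemidef)
    (hMb : (b • (1 : Matrix (Fin k) (Fin k) ℝ) - M).PosSemidef)
    (u : Fin k → ℝ) :
    (b⁻¹ * Real.sqrt (∑ i, (((a⁻¹ • (Matrix.diagonal d)⁻¹ + 1)⁻¹).mulVec u i) ^ 2)
        ≤ Real.sqrt (∑ i, ((((Matrix.diagonal d)⁻¹ + M)⁻¹).mulVec u i) ^ 2))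
    ∧ (Real.sqrt (∑ i, ((((Matrix.diagonal d)⁻¹ + M)⁻¹).mulVec u i) ^ 2)
        ≤ a⁻¹ * Real.sqrt (∑ i, (((b⁻¹ • (Matrix.diagonal d)⁻¹ + 1)⁻¹).mulVec u i) ^ 2))
    ∧ (b⁻¹ ^ 2 * Matrix.trace (((a⁻¹ • (Matrix.diagonal d)⁻¹ + 1)⁻¹) ^ 2)
        ≤ Matrix.trace ((((Matrix.diagonal d)⁻¹ + M)⁻¹) ^ 2)
      ∧ Matrix.trace ((((Matrix.diagonal d)⁻¹ + M)⁻¹) ^ 2)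
        ≤ a⁻¹ ^ 2 * Matrix.trace (((b⁻¹ • (Matrix.diagonal d)⁻¹ + 1)⁻¹) ^ 2)) := by
  have hb : 0 < b := ha.trans hab
  set g : Fin k → ℝ := fun i => (d i)⁻¹ with hgdef
  have hg : ∀ i, 0 < g i := fun i => inv_pos.mpr (hd i)
  -- diagonal inverse
  have hDinv : (Matrix.diagonal d)⁻¹ = Matrix.diagonal g := by
    apply Matrix.inv_eq_right_inv
    have : (fun i => d i * g i) = fun _ => (1:ℝ) := funext fun i => mul_inv_cancel₀ (hd i).ne'
    rw [diagonal_mul_diagonal, this, Matrix.diagonal_one]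
  -- the matrices P, Q as diagonals
  have hdiagsum : ∀ (c : ℝ) , c • Matrix.diagonal g + (1 : Matrix (Fin k) (Fin k) ℝ)
      = Matrix.diagonal (fun i => c * g i + 1) := fun c => by
    rw [← Matrix.diagonal_smul, ← Matrix.diagonal_one, Matrix.diagonal_add]
    congr 1
  have hdiaginv : ∀ (f : Fin k → ℝ), (∀ i, f i ≠ 0) →
      (Matrix.diagonal f)⁻¹ = Matrix.diagonal (fun i => (f i)⁻¹) := fun f hf => by
    apply Matrix.inv_eq_right_inv
    have : (fun i => f i * (f i)⁻¹) = fun _ => (1:ℝ) := funext fun i => mul_inv_cancel₀ (hf i)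
    rw [diagonal_mul_diagonal, this, Matrix.diagonal_one]
  set pa : Fin k → ℝ := fun i => (a⁻¹ * g i + 1)⁻¹ with hpa
  set qb : Fin k → ℝ := fun i => (b⁻¹ * g i + 1)⁻¹ with hqb
  have hPinv : (a⁻¹ • (Matrix.diagonal d)⁻¹ + 1)⁻¹ = Matrix.diagonal pa := by
    rw [hDinv, hdiagsum]
    exact hdiaginv _ fun i => (add_pos (mul_pos (inv_pos.mpr ha) (hg i)) one_pos).ne'
  have hQinv : (b⁻¹ • (Matrix.diagonal d)⁻¹ + 1)⁻¹ = Matrix.diagonal qb := by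
    rw [hDinv, hdiagsum]
    exact hdiaginv _ fun i => (add_pos (mul_pos (inv_pos.mpr hb) (hg i)) one_pos).ne'
  -- A and its positivity
  set A : Matrix (Fin k) (Fin k) ℝ := Matrix.diagonal g + M with hAdef
  have hMpos : M.PosDef := by
    have h1 : (a • (1 : Matrix (Fin k) (Fin k) ℝ)).PosDef := by
      rw [smul_one_eq_diagonal]
      exact Matrix.PosDef.diagonal fun i => ha
    have := h1.add_posSemidef hMa
    rwa [add_sub_cancel] at this
  have hApos : A.PosDef := Matrix.PosDef.posSemidef_add (Matrix.PosSemidef.diagonal fun i => (hg i).le) hMpos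
  have hAA : A * A⁻¹ = 1 := Matrix.mul_nonsing_inv A (isUnit_iff_ne_zero.mpr hApos.det_pos.ne')
  set p' : Fin k → ℝ := fun i => (g i + a)⁻¹ with hp'
  set q' : Fin k → ℝ := fun i => (g i + b)⁻¹ with hq'
  have hPm : Matrix.diagonal p' * Matrix.diagonal (fun i => g i + a) = 1 := by
    have h : (fun i => p' i * (g i + a)) = fun _ => (1:ℝ) :=
      funext fun i => inv_mul_cancel₀ (add_pos (hg i) ha).ne'
    rw [diagonal_mul_diagonal, h, Matrix.diagonal_one]
  have hQm : Matrix.diagonal q' * Matrix.diagonal (fun i => g i + b) = 1 := by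
    have h : (fun i => q' i * (g i + b)) = fun _ => (1:ℝ) :=
      funext fun i => inv_mul_cancel₀ (add_pos (hg i) hb).ne'
    rw [diagonal_mul_diagonal, h, Matrix.diagonal_one]
  have hAsplitA : A = Matrix.diagonal (fun i => g i + a) + (M - a • 1) := by
    have h1 : Matrix.diagonal (fun i => g i + a) = Matrix.diagonal g + a • 1 := by
      rw [smul_one_eq_diagonal, Matrix.diagonal_add]
    rw [h1, hAdef]; abel
  have hAsplitB : A = Matrix.diagonal (fun i => g i + b) - (b • 1 - M) := by
    have h1 : Matrix.diagonal (fun i => g i + b) = Matrix.diagonal g + b • 1 := by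
      rw [smul_one_eq_diagonal, Matrix.diagonal_add]
    rw [h1, hAdef]; abel
  have core : ∀ v : Fin k → ℝ,
      b⁻¹ * nrm (Matrix.diagonal pa *ᵥ v) ≤ nrm (A⁻¹ *ᵥ v) ∧
      nrm (A⁻¹ *ᵥ v) ≤ a⁻¹ * nrm (Matrix.diagonal qb *ᵥ v) := by
    intro v
    set z := A⁻¹ *ᵥ v with hz
    have hv : A *ᵥ z = v := by rw [hz, mulVec_mulVec, hAA, one_mulVec]
    have hRa : nrm ((M - a • 1) *ᵥ z) ≤ (b - a) * nrm z := by
      apply psd_vec_bound (by linarith) hMa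
      have h : (b - a) • (1 : Matrix (Fin k) (Fin k) ℝ) - (M - a • 1) = b • 1 - M := by
        rw [sub_smul]; abel
      rwa [h]
    have hRb : nrm ((b • 1 - M) *ᵥ z) ≤ (b - a) * nrm z := by
      apply psd_vec_bound (by linarith) hMb
      have h : (b - a) • (1 : Matrix (Fin k) (Fin k) ℝ) - (b • 1 - M) = M - a • 1 := by
        rw [sub_smul]; abel
      rwa [h]
    constructor
    · have hPv : Matrix.diagonal pa *ᵥ v = a • (Matrix.diagonal p' *ᵥ v) := by
        funext i
        rw [Pi.smul_apply, mulVec_diagonal, mulVec_diagonal, smul_eq_mul]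
        have h1 : pa i = a * p' i := by
          show (a⁻¹ * g i + 1)⁻¹ = a * (g i + a)⁻¹
          have h2 : a⁻¹ * g i + 1 = a⁻¹ * (g i + a) := by field_simp
          rw [h2, mul_inv, inv_inv]
        rw [h1]; ring
      have hsplit : Matrix.diagonal p' *ᵥ v = z + Matrix.diagonal p' *ᵥ ((M - a • 1) *ᵥ z) := by
        conv_lhs => rw [← hv, hAsplitA]
        rw [add_mulVec, mulVec_add, mulVec_mulVec, hPm, one_mulVec]
      have hd1 : nrm (Matrix.diagonal p' *ᵥ ((M - a • 1) *ᵥ z)) ≤ a⁻¹ * ((b - a) * nrm z) := by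
        calc nrm (Matrix.diagonal p' *ᵥ ((M - a • 1) *ᵥ z))
            ≤ a⁻¹ * nrm ((M - a • 1) *ᵥ z) :=
              nrm_diag_le (inv_nonneg.mpr ha.le)
                (fun i => (inv_pos.mpr (add_pos (hg i) ha)).le)
                (fun i => inv_anti₀ ha (by linarith [(hg i).le])) _
        _ ≤ a⁻¹ * ((b - a) * nrm z) :=
              mul_le_mul_of_nonneg_left hRa (inv_nonneg.mpr ha.le)
      have hch : nrm (Matrix.diagonal p' *ᵥ v) ≤ nrm z + a⁻¹ * ((b - a) * nrm z) :=
        hsplit ▸ le_trans (nrm_add_le _ _) (add_le_add le_rfl hd1)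
      rw [hPv, nrm_smul a ha.le]
      have harith : b⁻¹ * (a * (nrm z + a⁻¹ * ((b - a) * nrm z))) = nrm z := by
        field_simp
        ring
      calc b⁻¹ * (a * nrm (Matrix.diagonal p' *ᵥ v))
          ≤ b⁻¹ * (a * (nrm z + a⁻¹ * ((b - a) * nrm z))) := by
            apply mul_le_mul_of_nonneg_left _ (inv_nonneg.mpr hb.le)
            exact mul_le_mul_of_nonneg_left hch ha.le
      _ = nrm z := harith
    · have hQv : Matrix.diagonal qb *ᵥ v = b • (Matrix.diagonal q' *ᵥ v) := by
        funext i
        rw [Pi.smul_apply, mulVec_diagonal, mulVec_diagonal, smul_eq_mul]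
        have h1 : qb i = b * q' i := by
          show (b⁻¹ * g i + 1)⁻¹ = b * (g i + b)⁻¹
          have h2 : b⁻¹ * g i + 1 = b⁻¹ * (g i + b) := by field_simp
          rw [h2, mul_inv, inv_inv]
        rw [h1]; ring
      have hsplit : Matrix.diagonal q' *ᵥ v = z - Matrix.diagonal q' *ᵥ ((b • 1 - M) *ᵥ z) := by
        conv_lhs => rw [← hv, hAsplitB]
        rw [sub_mulVec, mulVec_sub, mulVec_mulVec, hQm, one_mulVec]
      have hd1 : nrm (Matrix.diagonal q' *ᵥ ((b • 1 - M) *ᵥ z)) ≤ b⁻¹ * ((b - a) * nrm z) := by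
        calc nrm (Matrix.diagonal q' *ᵥ ((b • 1 - M) *ᵥ z))
            ≤ b⁻¹ * nrm ((b • 1 - M) *ᵥ z) :=
              nrm_diag_le (inv_nonneg.mpr hb.le)
                (fun i => (inv_pos.mpr (add_pos (hg i) hb)).le)
                (fun i => inv_anti₀ hb (by linarith [(hg i).le])) _
        _ ≤ b⁻¹ * ((b - a) * nrm z) :=
              mul_le_mul_of_nonneg_left hRb (inv_nonneg.mpr hb.le)
      have hzsum : z = Matrix.diagonal q' *ᵥ v + Matrix.diagonal q' *ᵥ ((b • 1 - M) *ᵥ z) := by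
        rw [hsplit]; abel
      have hch : nrm z ≤ nrm (Matrix.diagonal q' *ᵥ v) + b⁻¹ * ((b - a) * nrm z) := by
        conv_lhs => rw [hzsum]
        exact le_trans (nrm_add_le _ _) (add_le_add le_rfl hd1)
      have h2 : a * nrm z ≤ b * nrm (Matrix.diagonal q' *ᵥ v) := by
        have hb' := hb.ne'
        have := mul_le_mul_of_nonneg_left hch hb.le
        have he : b * (nrm (Matrix.diagonal q' *ᵥ v) + b⁻¹ * ((b - a) * nrm z))
            = b * nrm (Matrix.diagonal q' *ᵥ v) + (b - a) * nrm z := by field_simp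
        rw [he] at this
        linarith
      rw [hQv, nrm_smul b hb.le]
      calc nrm z = a⁻¹ * (a * nrm z) := by field_simp
      _ ≤ a⁻¹ * (b * nrm (Matrix.diagonal q' *ᵥ v)) :=
          mul_le_mul_of_nonneg_left h2 (inv_nonneg.mpr ha.le)
  -- now conclude
  rw [hPinv, hQinv, hDinv, ← hAdef]
  have hnrm_eq : ∀ (X : Matrix (Fin k) (Fin k) ℝ) (w : Fin k → ℝ),
      Real.sqrt (∑ i, (X.mulVec w i) ^ 2) = nrm (X *ᵥ w) := fun X w => rfl
  refine ⟨?_, ?_, ?_, ?_⟩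
  · rw [hnrm_eq, hnrm_eq]; exact (core u).1
  · rw [hnrm_eq, hnrm_eq]; exact (core u).2
  · have hXsym : ∀ i j, A⁻¹ i j = A⁻¹ j i := fun i j => by
      have h := hApos.inv.isHermitian.apply j i
      simpa using h
    have hpasym : ∀ i j, Matrix.diagonal pa i j = Matrix.diagonal pa j i := fun i j =>
      ((Matrix.isSymm_diagonal pa).apply j i)
    rw [trace_sq_eq _ hXsym, trace_sq_eq _ hpasym, Finset.mul_sum]
    refine Finset.sum_le_sum fun i _ => ?_
    rw [← mul_pow]
    exact pow_le_pow_left₀ (mul_nonneg (inv_nonneg.mpr hb.le) (nrm_nonneg _)) (core _).1 2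
  · have hXsym : ∀ i j, A⁻¹ i j = A⁻¹ j i := fun i j => by
      have h := hApos.inv.isHermitian.apply j i
      simpa using h
    have hqbsym : ∀ i j, Matrix.diagonal qb i j = Matrix.diagonal qb j i := fun i j =>
      ((Matrix.isSymm_diagonal qb).apply j i)
    rw [trace_sq_eq _ hXsym, trace_sq_eq _ hqbsym, Finset.mul_sum]
    refine Finset.sum_le_sum fun i _ => ?_
    rw [← mul_pow]
    exact pow_le_pow_left₀ (nrm_nonneg _) (core _).2 2
end

section
/- Let v ∈ ℝ^p be a nonzero vector and M ∈ ℝ^{p×p} a symmetric positive definite matrix. Define f(w) = vᵀw / ‖w‖ for w ≠ 0. Then the function t ↦ f((I_p + tM)⁻¹ v) is non-increasing on [0, ∞). -/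
open Matrix Set
open Set

lemma perterm (x y t A B : ℝ) (hx : 0 < x) (hy : 0 < y) (ht : 0 ≤ t) (hA : 0 ≤ A) (hB : 0 ≤ B) :
    0 ≤ (A * (1+t*x)⁻¹^2 * (B * y * (1+t*y)⁻¹^2) - A * (1+t*x)⁻¹ * (B * y * (1+t*y)⁻¹^3))
      + (B * (1+t*y)⁻¹^2 * (A * x * (1+t*x)⁻¹^2) - B * (1+t*y)⁻¹ * (A * x * (1+t*x)⁻¹^3)) := by
  have h1 : (0:ℝ) < 1 + t*x := by nlinarith
  have h2 : (0:ℝ) < 1 + t*y := by nlinarith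
  have key : (A * (1+t*x)⁻¹^2 * (B * y * (1+t*y)⁻¹^2) - A * (1+t*x)⁻¹ * (B * y * (1+t*y)⁻¹^3))
      + (B * (1+t*y)⁻¹^2 * (A * x * (1+t*x)⁻¹^2) - B * (1+t*y)⁻¹ * (A * x * (1+t*x)⁻¹^3))
    = A * B * t * (x - y)^2 * ((1+t*x)⁻¹)^3 * ((1+t*y)⁻¹)^3 := by
    field_simp
    ring
  rw [key]
  positivity

lemma keyineq {n : ℕ} (a l : Fin n → ℝ) (ha : ∀ i, 0 ≤ a i) (hl : ∀ i, 0 < l i)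
    (t : ℝ) (ht : 0 ≤ t) (b : Fin n → ℝ) (hb : ∀ i, b i = (1 + t * l i)⁻¹) :
    (∑ i, a i * b i) * (∑ i, a i * l i * b i ^ 3) ≤
      (∑ i, a i * b i ^ 2) * (∑ i, a i * l i * b i ^ 2) := by
  rw [Finset.sum_mul_sum, Finset.sum_mul_sum, ← sub_nonneg, ← Finset.sum_sub_distrib]
  have swap : ∑ i, ∑ j, ((a i * b i ^ 2) * (a j * l j * b j ^ 2) - (a i * b i) * (a j * l j * b j ^ 3))
      = ∑ i, ∑ j, ((a j * b j ^ 2) * (a i * l i * b i ^ 2) - (a j * b j) * (a i * l i * b i ^ 3)) := by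
    exact Finset.sum_comm
  have h2 : 0 ≤ ∑ i, ∑ j, (((a i * b i ^ 2) * (a j * l j * b j ^ 2) - (a i * b i) * (a j * l j * b j ^ 3))
      + ((a j * b j ^ 2) * (a i * l i * b i ^ 2) - (a j * b j) * (a i * l i * b i ^ 3))) := by
    apply Finset.sum_nonneg; intro i _
    apply Finset.sum_nonneg; intro j _
    have := perterm (l i) (l j) t (a i) (a j) (hl i) (hl j) ht (ha i) (ha j)
    rw [hb i, hb j]
    convert this using 1 <;> ring
  simp only [Finset.sum_add_distrib] at h2
  rw [← swap] at h2
  simp only [Finset.sum_sub_distrib] at *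
  linarith

section
variable {n : ℕ} (a l : Fin n → ℝ)

lemma hasDerivN (ha : ∀ i, 0 ≤ a i) (hl : ∀ i, 0 < l i) (t : ℝ) (ht : 0 ≤ t) :
    HasDerivAt (fun s => ∑ i, a i * (1 + s * l i)⁻¹)
      (∑ i, a i * (-(l i) / (1 + t * l i) ^ 2)) t := by
  apply HasDerivAt.fun_sum
  intro i _
  have hne : (1 + t * l i) ≠ 0 := by have := hl i; positivity
  have h1 : HasDerivAt (fun s : ℝ => 1 + s * l i) (l i) t := by
    simpa using ((hasDerivAt_id t).mul_const (l i)).const_add 1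
  simpa using (h1.inv hne).const_mul (a i)

lemma hasDerivQ (ha : ∀ i, 0 ≤ a i) (hl : ∀ i, 0 < l i) (t : ℝ) (ht : 0 ≤ t) :
    HasDerivAt (fun s => ∑ i, a i * ((1 + s * l i)⁻¹) ^ 2)
      (∑ i, a i * (2 * (1 + t * l i)⁻¹ * (-(l i) / (1 + t * l i) ^ 2))) t := by
  apply HasDerivAt.fun_sum
  intro i _
  have hne : (1 + t * l i) ≠ 0 := by have := hl i; positivity
  have h1 : HasDerivAt (fun s : ℝ => 1 + s * l i) (l i) t := by
    simpa using ((hasDerivAt_id t).mul_const (l i)).const_add 1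
  have h2 := (h1.inv hne).pow 2
  simpa [mul_comm, mul_assoc, mul_left_comm] using h2.const_mul (a i)

end

section
variable {n : ℕ}

lemma scalarAnti (a l : Fin n → ℝ) (ha : ∀ i, 0 ≤ a i) (hl : ∀ i, 0 < l i)
    (hex : ∃ i, 0 < a i) :
    AntitoneOn (fun t => (∑ i, a i * (1 + t * l i)⁻¹) /
      Real.sqrt (∑ i, a i * ((1 + t * l i)⁻¹) ^ 2)) (Ici 0) := by
  have keyineq' := @keyineq n a l ha hl
  have hQpos : ∀ t ∈ Ici (0:ℝ), 0 < ∑ i, a i * ((1 + t * l i)⁻¹) ^ 2 := by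
    intro t ht
    obtain ⟨i0, hi0⟩ := hex
    apply Finset.sum_pos'
    · intro i _
      exact mul_nonneg (ha i) (sq_nonneg _)
    · refine ⟨i0, Finset.mem_univ _, ?_⟩
      have h1 : (0:ℝ) < 1 + t * l i0 := by nlinarith [hl i0, (mem_Ici.mp ht)]
      have : (0:ℝ) < ((1 + t * l i0)⁻¹) ^ 2 := by positivity
      exact mul_pos hi0 this
  have hDeriv : ∀ t ∈ Ici (0:ℝ), HasDerivAt (fun t => (∑ i, a i * (1 + t * l i)⁻¹) /
      Real.sqrt (∑ i, a i * ((1 + t * l i)⁻¹) ^ 2))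
      (((∑ i, a i * (-(l i) / (1 + t * l i) ^ 2)) * Real.sqrt (∑ i, a i * ((1 + t * l i)⁻¹) ^ 2)
        - (∑ i, a i * (1 + t * l i)⁻¹) *
          ((∑ i, a i * (2 * (1 + t * l i)⁻¹ * (-(l i) / (1 + t * l i) ^ 2))) /
            (2 * Real.sqrt (∑ i, a i * ((1 + t * l i)⁻¹) ^ 2)))) /
        (Real.sqrt (∑ i, a i * ((1 + t * l i)⁻¹) ^ 2)) ^ 2) t := by
    intro t ht
    have hQ := hQpos t ht
    exact (hasDerivN a l ha hl t ht).div ((hasDerivQ a l ha hl t ht).sqrt hQ.ne')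
      (Real.sqrt_pos.mpr hQ).ne'
  have hderivle : ∀ t ∈ Ioi (0:ℝ), deriv (fun t => (∑ i, a i * (1 + t * l i)⁻¹) /
      Real.sqrt (∑ i, a i * ((1 + t * l i)⁻¹) ^ 2)) t ≤ 0 := by
    intro t ht
    have ht' : t ∈ Ici (0:ℝ) := mem_Ici.mpr (le_of_lt ht)
    rw [(hDeriv t ht').deriv]
    set b : Fin n → ℝ := fun i => (1 + t * l i)⁻¹ with hbdef
    have hb : ∀ i, b i = (1 + t * l i)⁻¹ := fun i => rfl
    have hbpos : ∀ i, 0 < b i := by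
      intro i
      have : (0:ℝ) < 1 + t * l i := by nlinarith [hl i, (mem_Ici.mp ht')]
      positivity
    have hQ := hQpos t ht'
    set Q : ℝ := ∑ i, a i * ((1 + t * l i)⁻¹) ^ 2 with hQdef
    set S : ℝ := Real.sqrt Q with hSdef
    have hS : 0 < S := Real.sqrt_pos.mpr hQ
    have hS2 : S ^ 2 = Q := Real.sq_sqrt hQ.le
    -- rewrite derivative sums in terms of b
    have hN' : (∑ i, a i * (-(l i) / (1 + t * l i) ^ 2)) = -∑ i, a i * l i * b i ^ 2 := by
      rw [← Finset.sum_neg_distrib]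
      apply Finset.sum_congr rfl
      intro i _
      have : (0:ℝ) < 1 + t * l i := by nlinarith [hl i, (mem_Ici.mp ht')]
      rw [hb i]
      field_simp
    have hQ' : (∑ i, a i * (2 * (1 + t * l i)⁻¹ * (-(l i) / (1 + t * l i) ^ 2)))
        = -(2 * ∑ i, a i * l i * b i ^ 3) := by
      rw [Finset.mul_sum, ← Finset.sum_neg_distrib]
      apply Finset.sum_congr rfl
      intro i _
      have : (0:ℝ) < 1 + t * l i := by nlinarith [hl i, (mem_Ici.mp ht')]
      rw [hb i]
      field_simp
    have hNb : (∑ i, a i * (1 + t * l i)⁻¹) = ∑ i, a i * b i := rfl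
    have hQb : Q = ∑ i, a i * b i ^ 2 := rfl
    rw [hN', hQ', hNb]
    have hkey := keyineq' t (mem_Ici.mp ht') b hb
    have hNnonneg : 0 ≤ ∑ i, a i * b i := by
      apply Finset.sum_nonneg; intro i _; exact mul_nonneg (ha i) (hbpos i).le
    -- numerator ≤ 0
    apply div_nonpos_of_nonpos_of_nonneg _ (sq_nonneg S)
    have hnum : (-∑ i, a i * l i * b i ^ 2) * S -
        (∑ i, a i * b i) * (-(2 * ∑ i, a i * l i * b i ^ 3) / (2 * S))
        = ((∑ i, a i * b i) * (∑ i, a i * l i * b i ^ 3)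
            - (∑ i, a i * l i * b i ^ 2) * Q) / S := by
      rw [← hS2]
      field_simp
      ring
    rw [hnum]
    apply div_nonpos_of_nonpos_of_nonneg _ hS.le
    rw [sub_nonpos, hQb]
    calc (∑ i, a i * b i) * (∑ i, a i * l i * b i ^ 3)
        ≤ (∑ i, a i * b i ^ 2) * (∑ i, a i * l i * b i ^ 2) := hkey
      _ = (∑ i, a i * l i * b i ^ 2) * (∑ i, a i * b i ^ 2) := mul_comm _ _
  apply antitoneOn_of_deriv_nonpos (convex_Ici 0)
  · intro t ht
    exact ((hDeriv t ht).continuousAt).continuousWithinAt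
  · intro t ht
    rw [interior_Ici] at ht
    exact ((hDeriv t (mem_Ici.mpr (le_of_lt ht))).differentiableAt).differentiableWithinAt
  · intro t ht
    rw [interior_Ici] at ht
    exact hderivle t ht

end

theorem stmt_3 {p : ℕ} (v : Fin p → ℝ) (hv : v ≠ 0)
    (M : Matrix (Fin p) (Fin p) ℝ) (hM : M.PosDef) (hMs : M.IsSymm) :
    AntitoneOn (fun t : ℝ =>
        (v ⬝ᵥ (((1 : Matrix (Fin p) (Fin p) ℝ) + t • M)⁻¹).mulVec v) /
          Real.sqrt (∑ i, ((((1 : Matrix (Fin p) (Fin p) ℝ) + t • M)⁻¹).mulVec v i) ^ 2))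
      (Set.Ici (0 : ℝ)) := by
  classical
  have hH : M.IsHermitian := hM.isHermitian
  set U : Matrix (Fin p) (Fin p) ℝ := (Matrix.IsHermitian.eigenvectorUnitary hH : Matrix (Fin p) (Fin p) ℝ) with hU
  have hUU : star U * U = 1 := Unitary.coe_star_mul_self _
  have hUU' : U * star U = 1 := Unitary.coe_mul_star_self _
  set lam : Fin p → ℝ := hH.eigenvalues with hlamdef
  have hlam : ∀ i, 0 < lam i := fun i => hM.eigenvalues_pos i
  have hspec : M = U * Matrix.diagonal lam * star U := by
    have := hH.spectral_theorem
    simpa [hU] using this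
  set c : Fin p → ℝ := (star U).mulVec v with hc
  have hcv : U.mulVec c = v := by
    rw [hc, mulVec_mulVec, hUU', one_mulVec]
  have hcne : c ≠ 0 := by
    intro h
    apply hv
    rw [← hcv, h, mulVec_zero]
  have hinv : ∀ t : ℝ, 0 ≤ t →
      ((1 : Matrix (Fin p) (Fin p) ℝ) + t • M)⁻¹
        = U * Matrix.diagonal (fun i => (1 + t * lam i)⁻¹) * star U := by
    intro t ht
    have hne : ∀ i, (1 + t * lam i) ≠ 0 := by
      intro i; have := hlam i; positivity
    have expand : (1 : Matrix (Fin p) (Fin p) ℝ) + t • M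
        = U * Matrix.diagonal (fun i => 1 + t * lam i) * star U := by
      have hdiag : Matrix.diagonal (fun i => 1 + t * lam i)
          = (1 : Matrix (Fin p) (Fin p) ℝ) + t • Matrix.diagonal lam := by
        rw [← Matrix.diagonal_one, ← Matrix.diagonal_smul, ← Matrix.diagonal_add]
        congr 1
      rw [hdiag, Matrix.mul_add, Matrix.mul_one, Matrix.add_mul, hUU', Matrix.mul_smul,
        Matrix.smul_mul, ← hspec]
    rw [expand]
    apply Matrix.inv_eq_right_inv
    have hDD : Matrix.diagonal (fun i => 1 + t * lam i) *
        Matrix.diagonal (fun i => (1 + t * lam i)⁻¹) = 1 := by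
      rw [Matrix.diagonal_mul_diagonal, ← Matrix.diagonal_one]
      exact congrArg Matrix.diagonal (funext fun i => mul_inv_cancel₀ (hne i))
    simp only [Matrix.mul_assoc]
    rw [← Matrix.mul_assoc (star U) U, hUU, Matrix.one_mul,
      ← Matrix.mul_assoc (Matrix.diagonal fun i => 1 + t * lam i), hDD, Matrix.one_mul, hUU']
  -- pointwise formulas
  have hx : ∀ t : ℝ, 0 ≤ t →
      (((1 : Matrix (Fin p) (Fin p) ℝ) + t • M)⁻¹).mulVec v
        = U.mulVec (fun i => (1 + t * lam i)⁻¹ * c i) := by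
    intro t ht
    rw [hinv t ht, ← Matrix.mulVec_mulVec, ← Matrix.mulVec_mulVec, ← hc]
    have hd : (Matrix.diagonal fun i => (1 + t * lam i)⁻¹) *ᵥ c
        = fun i => (1 + t * lam i)⁻¹ * c i := by
      funext i
      exact Matrix.mulVec_diagonal _ _ _
    rw [hd]
  have hnum : ∀ t : ℝ, 0 ≤ t →
      v ⬝ᵥ (((1 : Matrix (Fin p) (Fin p) ℝ) + t • M)⁻¹).mulVec v
        = ∑ i, c i ^ 2 * (1 + t * lam i)⁻¹ := by
    intro t ht
    rw [hx t ht, Matrix.dotProduct_mulVec]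
    have hvU : v ᵥ* U = c := by
      rw [hc, Matrix.star_eq_conjTranspose, Matrix.conjTranspose_eq_transpose_of_trivial,
        Matrix.mulVec_transpose]
    rw [hvU]
    simp only [dotProduct]
    exact Finset.sum_congr rfl fun i _ => by ring
  have hden : ∀ t : ℝ, 0 ≤ t →
      (∑ i, ((((1 : Matrix (Fin p) (Fin p) ℝ) + t • M)⁻¹).mulVec v i) ^ 2)
        = ∑ i, c i ^ 2 * ((1 + t * lam i)⁻¹) ^ 2 := by
    intro t ht
    rw [hx t ht]
    set y : Fin p → ℝ := fun i => (1 + t * lam i)⁻¹ * c i with hy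
    have h1 : (∑ i, (U.mulVec y i) ^ 2) = (U.mulVec y) ⬝ᵥ (U.mulVec y) := by
      simp [dotProduct, sq]
    rw [h1, Matrix.dotProduct_mulVec]
    have h2 : (U.mulVec y) ᵥ* U = y := by
      rw [← Matrix.mulVec_transpose,
        ← Matrix.conjTranspose_eq_transpose_of_trivial U, ← Matrix.star_eq_conjTranspose,
        Matrix.mulVec_mulVec, hUU, Matrix.one_mulVec]
    rw [h2]
    simp only [dotProduct, hy]
    exact Finset.sum_congr rfl fun i _ => by ring
  -- apply scalar lemma
  have hanti := scalarAnti (fun i => c i ^ 2) lam (fun i => sq_nonneg (c i)) hlam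
    (by
      obtain ⟨i, hi⟩ := Function.ne_iff.mp hcne
      exact ⟨i, lt_of_le_of_ne (sq_nonneg _) (Ne.symm (pow_ne_zero 2 hi))⟩)
  intro s hs t ht hst
  have h1 := hanti hs ht hst
  simpa only [hnum s (mem_Ici.mp hs), hnum t (mem_Ici.mp ht),
    hden s (mem_Ici.mp hs), hden t (mem_Ici.mp ht)] using h1
end

section
/- Let y ∈ {-1,1}^n have i.i.d. Rademacher coordinates and let M ∈ ℝ^{n×n} be a random symmetric matrix, independent of y, that is almost surely positive semidefinite. Then there exists an absolute constant c > 0 such that P(yᵀMy ≥ c⁻¹ tr(M)) ≥ c⁻¹. -/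
open Matrix MeasureTheory ProbabilityTheory

noncomputable def sg (b : Bool) : ℝ := if b then 1 else -1
lemma sg_sq (b : Bool) : sg b * sg b = 1 := by cases b <;> simp [sg]
lemma sg_not (b : Bool) : sg (!b) = - sg b := by cases b <;> simp [sg]

lemma sum_flip_zero {n : ℕ} (r : Fin n) (f : (Fin n → Bool) → ℝ)
    (hf : ∀ v, f (Function.update v r (!(v r))) = - f v) :
    ∑ v : Fin n → Bool, f v = 0 := by
  apply Finset.sum_ninvolution (fun v => Function.update v r (!(v r)))
  · intro a; rw [hf]; ring
  · intro a _ h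
    apply congrFun at h
    have := h r
    simp at this
  · intro a; simp
  · intro a
    funext x
    by_cases hx : x = r
    · subst hx; simp
    · simp [Function.update_of_ne hx]

lemma sum_sg_pair {n : ℕ} (i j : Fin n) (hij : i ≠ j) :
    ∑ v : Fin n → Bool, sg (v i) * sg (v j) = 0 := by
  apply sum_flip_zero i
  intro v
  rw [Function.update_self, Function.update_of_ne (Ne.symm hij), sg_not]
  ring

lemma sum_sg_quad_zero {n : ℕ} (i j k r : Fin n) (hi : i ≠ r) (hj : j ≠ r) (hk : k ≠ r) :
    ∑ v : Fin n → Bool, sg (v i) * sg (v j) * sg (v k) * sg (v r) = 0 := by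
  apply sum_flip_zero r
  intro v
  rw [Function.update_self, Function.update_of_ne hi, Function.update_of_ne hj,
    Function.update_of_ne hk, sg_not]
  ring

lemma card_cube {n : ℕ} : ((Finset.univ : Finset (Fin n → Bool))).card = 2 ^ n := by
  simp [Finset.card_univ]

lemma sum_sg_two {n : ℕ} (i j : Fin n) :
    ∑ v : Fin n → Bool, sg (v i) * sg (v j) = if i = j then (2:ℝ)^n else 0 := by
  by_cases hij : i = j
  · subst hij
    rw [if_pos rfl, Finset.sum_congr rfl (fun v _ => sg_sq (v i))]
    simp [card_cube]
  · rw [if_neg hij]; exact sum_sg_pair i j hij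

lemma sum_sg_four {n : ℕ} (i j k l : Fin n) (hij : i ≠ j) (hkl : k ≠ l) :
    ∑ v : Fin n → Bool, sg (v i) * sg (v j) * (sg (v k) * sg (v l))
      = if (k = i ∧ l = j) ∨ (k = j ∧ l = i) then (2:ℝ)^n else 0 := by
  by_cases h1 : k = i ∧ l = j
  · obtain ⟨rfl, rfl⟩ := h1
    rw [if_pos (Or.inl ⟨rfl, rfl⟩)]
    have : ∀ v : Fin n → Bool, sg (v k) * sg (v l) * (sg (v k) * sg (v l)) = 1 := by
      intro v
      have := sg_sq (v k); have := sg_sq (v l); nlinarith [sg_sq (v k), sg_sq (v l)]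
    rw [Finset.sum_congr rfl (fun v _ => this v)]
    simp [card_cube]
  · by_cases h2 : k = j ∧ l = i
    · obtain ⟨rfl, rfl⟩ := h2
      rw [if_pos (Or.inr ⟨rfl, rfl⟩)]
      have : ∀ v : Fin n → Bool, sg (v l) * sg (v k) * (sg (v k) * sg (v l)) = 1 := by
        intro v; nlinarith [sg_sq (v k), sg_sq (v l)]
      rw [Finset.sum_congr rfl (fun v _ => this v)]
      simp [card_cube]
    · rw [if_neg (by tauto)]
      by_cases hki : k = i
      · subst hki
        have hlj : l ≠ j := fun h => h1 ⟨rfl, h⟩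
        rw [Finset.sum_congr rfl (fun v _ => (by ring :
          sg (v k) * sg (v j) * (sg (v k) * sg (v l))
            = sg (v k) * sg (v j) * sg (v k) * sg (v l)))]
        exact sum_sg_quad_zero k j k l hkl (Ne.symm hlj) hkl
      · by_cases hkj : k = j
        · subst hkj
          have hli : l ≠ i := fun h => h2 ⟨rfl, h⟩
          rw [Finset.sum_congr rfl (fun v _ => (by ring :
            sg (v i) * sg (v k) * (sg (v k) * sg (v l))
              = sg (v i) * sg (v k) * sg (v k) * sg (v l)))]
          exact sum_sg_quad_zero i k k l (Ne.symm hli) hkl hkl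
        · rw [Finset.sum_congr rfl (fun v _ => (by ring :
            sg (v i) * sg (v j) * (sg (v k) * sg (v l))
              = sg (v i) * sg (v j) * sg (v l) * sg (v k)))]
          exact sum_sg_quad_zero i j l k (Ne.symm hki) (Ne.symm hkj) (Ne.symm hkl)

section Moments
variable {n : ℕ} (m : Matrix (Fin n) (Fin n) ℝ)

noncomputable def Xq (v : Fin n → Bool) : ℝ :=
  (fun i => sg (v i)) ⬝ᵥ m.mulVec (fun i => sg (v i))

lemma Xq_expand (v : Fin n → Bool) :
    Xq m v = ∑ p : Fin n × Fin n, m p.1 p.2 * (sg (v p.1) * sg (v p.2)) := by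
  rw [Fintype.sum_prod_type]
  simp only [Xq, dotProduct, Matrix.mulVec, Finset.mul_sum]
  exact Finset.sum_congr rfl fun i _ => Finset.sum_congr rfl fun j _ => by ring

lemma sum_Xq : ∑ v : Fin n → Bool, Xq m v = 2^n * m.trace := by
  rw [Finset.sum_congr rfl (fun v _ => Xq_expand m v), Finset.sum_comm]
  have : ∀ p : Fin n × Fin n, ∑ v : Fin n → Bool, m p.1 p.2 * (sg (v p.1) * sg (v p.2))
      = if p.1 = p.2 then m p.1 p.2 * 2^n else 0 := by
    intro p
    rw [← Finset.mul_sum, sum_sg_two]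
    split_ifs <;> ring
  rw [Finset.sum_congr rfl (fun p _ => this p)]
  rw [Finset.sum_ite, Finset.sum_const_zero, add_zero]
  rw [show m.trace = ∑ i, m i i from rfl, Finset.mul_sum]
  apply Finset.sum_nbij' (fun p : Fin n × Fin n => p.1) (fun i : Fin n => (i, i)) <;>
    simp +contextual [eq_comm, mul_comm]

end Moments

section Z
variable {n : ℕ} (m : Matrix (Fin n) (Fin n) ℝ)

noncomputable def Zq (v : Fin n → Bool) : ℝ :=
  ∑ p ∈ Finset.univ.offDiag, m p.1 p.2 * (sg (v p.1) * sg (v p.2))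

lemma Xq_eq_trace_add_Zq (v : Fin n → Bool) : Xq m v = m.trace + Zq m v := by
  rw [Xq_expand, ← Finset.univ_product_univ, ← Finset.diag_union_offDiag,
    Finset.sum_union (Finset.disjoint_diag_offDiag _), Finset.sum_diag]
  congr 1
  rw [show m.trace = ∑ i, m i i from rfl]
  exact Finset.sum_congr rfl fun i _ => by rw [sg_sq]; ring

lemma sum_Zq : ∑ v : Fin n → Bool, Zq m v = 0 := by
  simp only [Zq]
  rw [Finset.sum_comm]
  apply Finset.sum_eq_zero
  intro p hp
  rw [← Finset.mul_sum, sum_sg_pair _ _ (Finset.mem_offDiag.mp hp).2.2, mul_zero]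

lemma sum_Zq_sq : ∑ v : Fin n → Bool, (Zq m v)^2
    = 2^n * ∑ p ∈ Finset.univ.offDiag, m p.1 p.2 * (m p.1 p.2 + m p.2 p.1) := by
  have expand : ∀ v, (Zq m v)^2 = ∑ p ∈ Finset.univ.offDiag, ∑ q ∈ Finset.univ.offDiag,
      m p.1 p.2 * m q.1 q.2 * (sg (v p.1) * sg (v p.2) * (sg (v q.1) * sg (v q.2))) := by
    intro v
    rw [sq, Zq, Finset.sum_mul_sum]
    exact Finset.sum_congr rfl fun p _ => Finset.sum_congr rfl fun q _ => by ring
  rw [Finset.sum_congr rfl fun v _ => expand v, Finset.sum_comm, Finset.mul_sum]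
  apply Finset.sum_congr rfl
  intro p hp
  obtain ⟨-, -, hp12⟩ := Finset.mem_offDiag.mp hp
  rw [Finset.sum_comm]
  have inner : ∀ q ∈ Finset.univ.offDiag,
      (∑ v : Fin n → Bool, m p.1 p.2 * m q.1 q.2 *
        (sg (v p.1) * sg (v p.2) * (sg (v q.1) * sg (v q.2))))
      = (if q = p then m p.1 p.2 * m q.1 q.2 * 2^n else 0)
        + (if q = Prod.swap p then m p.1 p.2 * m q.1 q.2 * 2^n else 0) := by
    intro q hq
    obtain ⟨-, -, hq12⟩ := Finset.mem_offDiag.mp hq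
    rw [← Finset.mul_sum, sum_sg_four p.1 p.2 q.1 q.2 hp12 hq12]
    have hiff : ((q.1 = p.1 ∧ q.2 = p.2) ∨ (q.1 = p.2 ∧ q.2 = p.1))
        ↔ (q = p ∨ q = Prod.swap p) := by
      constructor
      · rintro (⟨h1, h2⟩ | ⟨h1, h2⟩)
        · exact Or.inl (Prod.ext h1 h2)
        · exact Or.inr (Prod.ext h1 h2)
      · rintro (rfl | rfl)
        · exact Or.inl ⟨rfl, rfl⟩
        · exact Or.inr ⟨rfl, rfl⟩
    rw [if_congr hiff rfl rfl]
    have hne : ¬(q = p ∧ q = Prod.swap p) := by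
      rintro ⟨rfl, h2⟩
      exact hq12 (by simpa using congrArg Prod.fst h2)
    by_cases h1 : q = p
    · by_cases h2 : q = Prod.swap p
      · exact absurd ⟨h1, h2⟩ hne
      · rw [if_pos (Or.inl h1), if_pos h1, if_neg h2, add_zero]
    · by_cases h2 : q = Prod.swap p
      · rw [if_pos (Or.inr h2), if_neg h1, if_pos h2, zero_add]
      · rw [if_neg (by tauto), if_neg h1, if_neg h2, add_zero, mul_zero]
  rw [Finset.sum_congr rfl inner, Finset.sum_add_distrib,
    Finset.sum_ite_eq' _ p, Finset.sum_ite_eq' _ (Prod.swap p),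
    if_pos hp, if_pos (by simpa [Finset.mem_offDiag] using Ne.symm hp12)]
  simp only [Prod.fst_swap, Prod.snd_swap]
  ring
end Z

section PSD
variable {n : ℕ} {m : Matrix (Fin n) (Fin n) ℝ}

lemma psd_eval (hm : m.PosSemidef) (x : Fin n → ℝ) : 0 ≤ x ⬝ᵥ m.mulVec x := by
  simpa using hm.dotProduct_mulVec_nonneg x

lemma sum_two_pt (i j : Fin n) (a b : ℝ) (c : Fin n → ℝ) :
    (∑ s, c s * ((if s = i then a else 0) + (if s = j then b else 0))) = c i * a + c j * b := by
  simp [mul_add, mul_ite, Finset.sum_add_distrib, Finset.sum_ite_eq']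

lemma quad_eval (i j : Fin n) (a b : ℝ) :
    (fun r => (if r = i then a else 0) + (if r = j then b else 0)) ⬝ᵥ
      m.mulVec (fun r => (if r = i then a else 0) + (if r = j then b else 0))
      = a * (m i i * a + m i j * b) + b * (m j i * a + m j j * b) := by
  have hmv : ∀ r, m.mulVec (fun r => (if r = i then a else 0) + (if r = j then b else 0)) r
      = m r i * a + m r j * b := by
    intro r
    rw [Matrix.mulVec, dotProduct]
    exact sum_two_pt i j a b (fun s => m r s)
  rw [dotProduct, Finset.sum_congr rfl (fun r _ => by rw [hmv r])]
  rw [Finset.sum_congr rfl (fun r _ => mul_comm _ _), sum_two_pt i j]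
  ring

lemma diag_nonneg (hm : m.PosSemidef) (i : Fin n) : 0 ≤ m i i := by
  have := psd_eval hm (fun r => (if r = i then 1 else 0) + (if r = i then 0 else 0))
  rw [quad_eval i i 1 0] at this
  linarith

lemma entry_sq_le (hm : m.PosSemidef) (i j : Fin n) (hij : i ≠ j) :
    m i j * m i j ≤ m i i * m j j := by
  have hsym : m j i = m i j := by
    have := congrFun (congrFun hm.1 i) j
    simpa [Matrix.conjTranspose_apply] using this
  have hq : ∀ x : ℝ, 0 ≤ m i i * (x * x) + (2 * m i j) * x + m j j := by
    intro x
    have := psd_eval hm (fun r => (if r = i then x else 0) + (if r = j then 1 else 0))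
    rw [quad_eval i j x 1, hsym] at this
    nlinarith [this]
  have := discrim_le_zero hq
  rw [discrim] at this
  nlinarith [this]

lemma sum_Xq_sq_le (hm : m.PosSemidef) :
    ∑ v : Fin n → Bool, (Xq m v)^2 ≤ 3 * 2^n * m.trace^2 := by
  have hZ2 : ∑ v : Fin n → Bool, (Zq m v)^2 ≤ 2^n * (2 * m.trace^2) := by
    rw [sum_Zq_sq]
    have step1 : ∑ p ∈ Finset.univ.offDiag, m p.1 p.2 * (m p.1 p.2 + m p.2 p.1)
        ≤ ∑ p ∈ Finset.univ.offDiag, 2 * (m p.1 p.1 * m p.2 p.2) := by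
      apply Finset.sum_le_sum
      intro p hp
      obtain ⟨-, -, hp12⟩ := Finset.mem_offDiag.mp hp
      have hsym : m p.2 p.1 = m p.1 p.2 := by
        have := congrFun (congrFun hm.1 p.1) p.2
        simpa [Matrix.conjTranspose_apply] using this
      rw [hsym]
      nlinarith [entry_sq_le hm p.1 p.2 hp12]
    have step2 : ∑ p ∈ Finset.univ.offDiag, 2 * (m p.1 p.1 * m p.2 p.2)
        ≤ ∑ p : Fin n × Fin n, 2 * (m p.1 p.1 * m p.2 p.2) := by
      apply Finset.sum_le_sum_of_subset_of_nonneg (Finset.subset_univ _)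
      intro p _ _
      have := diag_nonneg hm p.1
      have := diag_nonneg hm p.2
      positivity
    have step3 : ∑ p : Fin n × Fin n, 2 * (m p.1 p.1 * m p.2 p.2) = 2 * m.trace^2 := by
      rw [Fintype.sum_prod_type, show m.trace = ∑ i, m i i from rfl, sq, Finset.sum_mul_sum]
      simp [Finset.mul_sum]
    have hbound := le_trans step1 (le_trans step2 (le_of_eq step3))
    have h2n : (0:ℝ) ≤ 2^n := by positivity
    nlinarith [hbound, h2n]
  have hexp : ∑ v : Fin n → Bool, (Xq m v)^2
      = 2^n * m.trace^2 + 2 * m.trace * (∑ v : Fin n → Bool, Zq m v)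
        + ∑ v : Fin n → Bool, (Zq m v)^2 := by
    have hterm : ∀ v ∈ (Finset.univ : Finset (Fin n → Bool)),
        (Xq m v)^2 = m.trace^2 + (2 * m.trace * Zq m v + (Zq m v)^2) := by
      intro v _
      rw [Xq_eq_trace_add_Zq]; ring
    rw [Finset.sum_congr rfl hterm, Finset.sum_add_distrib, Finset.sum_add_distrib,
      Finset.sum_const, card_cube, nsmul_eq_mul, ← Finset.mul_sum]
    push_cast
    ring
  rw [hexp, sum_Zq m, mul_zero, add_zero]
  nlinarith [hZ2]

lemma cube_count (hm : m.PosSemidef) :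
    (2:ℝ)^n / 12 ≤ ((Finset.univ : Finset (Fin n → Bool)).filter
      (fun v => (12:ℝ)⁻¹ * m.trace ≤ Xq m v)).card := by
  classical
  set F := ((Finset.univ : Finset (Fin n → Bool)).filter
      (fun v => (12:ℝ)⁻¹ * m.trace ≤ Xq m v)) with hF
  have hX0 : ∀ v, 0 ≤ Xq m v := fun v => psd_eval hm _
  have htr : 0 ≤ m.trace := by
    rw [show m.trace = ∑ i, m i i from rfl]
    exact Finset.sum_nonneg fun i _ => diag_nonneg hm i
  have h2n : (0:ℝ) < 2^n := by positivity
  rcases eq_or_lt_of_le htr with ht0 | htpos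
  · have : F = Finset.univ := by
      apply Finset.filter_true_of_mem
      intro v _
      rw [← ht0]
      simpa using hX0 v
    rw [this, card_cube]
    push_cast
    linarith
  · -- split the full sum
    have hsplit := Finset.sum_filter_add_sum_filter_not (Finset.univ : Finset (Fin n → Bool))
      (fun v => (12:ℝ)⁻¹ * m.trace ≤ Xq m v) (Xq m)
    have hcard : (((Finset.univ : Finset (Fin n → Bool)).filter
        (fun v => ¬ ((12:ℝ)⁻¹ * m.trace ≤ Xq m v))).card : ℝ) ≤ 2^n := by
      have h := Finset.card_filter_le (Finset.univ : Finset (Fin n → Bool))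
        (fun v => ¬ ((12:ℝ)⁻¹ * m.trace ≤ Xq m v))
      rw [card_cube] at h
      exact_mod_cast h
    have hcompl : ∑ v ∈ (Finset.univ : Finset (Fin n → Bool)).filter
        (fun v => ¬ ((12:ℝ)⁻¹ * m.trace ≤ Xq m v)), Xq m v ≤ 2^n * (12⁻¹ * m.trace) := by
      have hle : ∑ v ∈ (Finset.univ : Finset (Fin n → Bool)).filter
          (fun v => ¬ ((12:ℝ)⁻¹ * m.trace ≤ Xq m v)), Xq m v
          ≤ ∑ v ∈ (Finset.univ : Finset (Fin n → Bool)).filter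
            (fun v => ¬ ((12:ℝ)⁻¹ * m.trace ≤ Xq m v)), 12⁻¹ * m.trace := by
        apply Finset.sum_le_sum
        intro v hv
        have := (Finset.mem_filter.mp hv).2
        linarith [lt_of_not_ge this]
      rw [Finset.sum_const, nsmul_eq_mul] at hle
      have h12 : (0:ℝ) ≤ 12⁻¹ * m.trace := by positivity
      nlinarith [hle, hcard, h12]
    have hFsum : 2^n * m.trace * (11/12) ≤ ∑ v ∈ F, Xq m v := by
      rw [hF]
      have hX := sum_Xq m
      rw [← hsplit] at hX
      have h8 : (2:ℝ)^n * (12⁻¹ * m.trace) = (2^n * m.trace) * (1/12) := by ring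
      have h9 : (2:ℝ)^n * m.trace * (11/12) = 2^n * m.trace - (2^n * m.trace) * (1/12) := by ring
      linarith [hX, hcompl]
    have hCS : (∑ v ∈ F, Xq m v)^2 ≤ F.card * ∑ v ∈ F, (Xq m v)^2 :=
      sq_sum_le_card_mul_sum_sq
    have hsub : ∑ v ∈ F, (Xq m v)^2 ≤ 3 * 2^n * m.trace^2 := by
      refine le_trans ?_ (sum_Xq_sq_le hm)
      apply Finset.sum_le_sum_of_subset_of_nonneg (Finset.filter_subset _ _)
      intro v _ _
      positivity
    have hN0 : (0:ℝ) ≤ F.card := Nat.cast_nonneg _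
    have key : (2^n * m.trace * (11/12))^2 ≤ (F.card : ℝ) * (3 * 2^n * m.trace^2) := by
      calc (2^n * m.trace * (11/12))^2 ≤ (∑ v ∈ F, Xq m v)^2 := by
            apply sq_le_sq'
            · nlinarith [Finset.sum_nonneg (fun v (_ : v ∈ F) => hX0 v)]
            · exact hFsum
        _ ≤ (F.card : ℝ) * ∑ v ∈ F, (Xq m v)^2 := hCS
        _ ≤ (F.card : ℝ) * (3 * 2^n * m.trace^2) := by
            apply mul_le_mul_of_nonneg_left hsub hN0
    nlinarith [key, sq_nonneg m.trace, mul_pos h2n htpos, mul_pos (mul_pos h2n htpos) (mul_pos h2n htpos)]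
end PSD
theorem stmt_9 :
    ∃ c : ℝ, 0 < c ∧
      ∀ (Ω : Type) [MeasurableSpace Ω] (P : Measure Ω) [IsProbabilityMeasure P]
        (n : ℕ) (y : Ω → Fin n → ℝ) (M : Ω → Fin n → Fin n → ℝ),
        (∀ i, Measurable fun ω => y ω i) →
        (∀ i, P {ω | y ω i = 1} = 1 / 2 ∧ P {ω | y ω i = -1} = 1 / 2) →
        iIndepFun (fun i ω => y ω i) P →
        IndepFun y M P →
        (∀ᵐ ω ∂P, (Matrix.of (M ω)).PosSemidef) →
        ENNReal.ofReal c⁻¹ ≤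
          P {ω | c⁻¹ * Matrix.trace (Matrix.of (M ω))
              ≤ y ω ⬝ᵥ (Matrix.of (M ω)).mulVec (y ω)} := by
  classical
  refine ⟨12, by norm_num, ?_⟩
  intro Ω _ P _ n y M hy hy2 hiid hInd hPSD
  set S : Set Ω := {ω | (12:ℝ)⁻¹ * Matrix.trace (Matrix.of (M ω))
      ≤ y ω ⬝ᵥ (Matrix.of (M ω)).mulVec (y ω)} with hS
  have hymeas : Measurable y := measurable_pi_iff.mpr hy
  set σf : (Fin n → Bool) → (Fin n → ℝ) := fun v i => sg (v i) with hσf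
  set Yv : (Fin n → Bool) → Set Ω := fun v => y ⁻¹' {σf v} with hYv
  have hYmeas : ∀ v, MeasurableSet (Yv v) := fun v => hymeas (measurableSet_singleton _)
  set G : (Fin n → Bool) → Set (Fin n → Fin n → ℝ) := fun v =>
    {g | (12:ℝ)⁻¹ * Matrix.trace (Matrix.of g) ≤ σf v ⬝ᵥ (Matrix.of g).mulVec (σf v)} with hG
  have hGmeas : ∀ v, MeasurableSet (G v) := by
    intro v
    apply measurableSet_le
    · apply Measurable.const_mul
      show Measurable fun g : Fin n → Fin n → ℝ => ∑ i, g i i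
      exact Finset.measurable_sum _ fun i _ => (measurable_pi_apply i).comp (measurable_pi_apply i)
    · show Measurable fun g : Fin n → Fin n → ℝ => ∑ i, σf v i * ∑ j, g i j * σf v j
      apply Finset.measurable_sum
      intro i _
      apply Measurable.const_mul
      apply Finset.measurable_sum
      intro j _
      exact ((measurable_pi_apply j).comp (measurable_pi_apply i)).mul_const _
  set Bv : (Fin n → Bool) → Set Ω := fun v => M ⁻¹' (G v) with hBv
  -- independence of the y-event and the M-event
  have hYB : ∀ v, P (Yv v ∩ Bv v) = P (Yv v) * P (Bv v) := fun v =>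
    hInd.measure_inter_preimage_eq_mul _ _ (measurableSet_singleton _) (hGmeas v)
  -- the y-marginal: P (Yv v) = (1/2)^n
  have hPYv : ∀ v, P (Yv v) = (2:ENNReal)⁻¹ ^ n := by
    intro v
    have hset : Yv v = ⋂ i ∈ (Finset.univ : Finset (Fin n)),
        (fun ω => y ω i) ⁻¹' {σf v i} := by
      ext ω
      simp [hYv, funext_iff]
    rw [hset, hiid.measure_inter_preimage_eq_mul (Finset.univ : Finset (Fin n))
      (fun i _ => measurableSet_singleton _)]
    have hhalf : ∀ i : Fin n, P ((fun ω => y ω i) ⁻¹' {σf v i}) = (2:ENNReal)⁻¹ := by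
      intro i
      have hone : (1:ENNReal)/2 = (2:ENNReal)⁻¹ := by rw [one_div]
      cases hvi : v i
      · have : (fun ω => y ω i) ⁻¹' {σf v i} = {ω | y ω i = -1} := by
          ext ω; simp [hσf, hvi, sg]
        rw [this, (hy2 i).2, hone]
      · have : (fun ω => y ω i) ⁻¹' {σf v i} = {ω | y ω i = 1} := by
          ext ω; simp [hσf, hvi, sg]
        rw [this, (hy2 i).1, hone]
    rw [Finset.prod_congr rfl (fun i _ => hhalf i), Finset.prod_const]
    simp
  -- partition bound: ∑_v P (S ∩ Yv v) ≤ P S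
  have hdisj : Set.PairwiseDisjoint (Finset.univ : Finset (Fin n → Bool))
      (fun v => toMeasurable P S ∩ Yv v) := by
    intro v _ w _ hvw
    apply Set.disjoint_left.mpr
    rintro ω ⟨-, h1⟩ ⟨-, h2⟩
    apply hvw
    have h12 : σf v = σf w := by
      have e1 : y ω = σf v := h1
      have e2 : y ω = σf w := h2
      rw [← e1, e2]
    funext i
    have := congrFun h12 i
    simp only [hσf] at this
    cases hvi : v i <;> cases hwi : w i <;> rw [hvi, hwi] at this <;>
      simp [sg] at this <;> first | rfl | norm_num at this
  have htotal : ∑ v : Fin n → Bool, P (S ∩ Yv v) ≤ P S := by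
    calc ∑ v : Fin n → Bool, P (S ∩ Yv v)
        ≤ ∑ v : Fin n → Bool, P (toMeasurable P S ∩ Yv v) := by
          apply Finset.sum_le_sum
          intro v _
          exact measure_mono (Set.inter_subset_inter_left _ (subset_toMeasurable P S))
      _ = P (⋃ v ∈ (Finset.univ : Finset (Fin n → Bool)), toMeasurable P S ∩ Yv v) := by
          rw [measure_biUnion_finset hdisj
            (fun v _ => (measurableSet_toMeasurable P S).inter (hYmeas v))]
      _ ≤ P (toMeasurable P S) := by
          apply measure_mono
          intro ω hω
          simp only [Set.mem_iUnion] at hω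
          obtain ⟨v, -, hv, -⟩ := hω
          exact hv
      _ = P S := measure_toMeasurable S
  -- the subset relation
  have hsub : ∀ v, Yv v ∩ Bv v ⊆ S ∩ Yv v := by
    rintro v ω ⟨h1, h2⟩
    have hyω : y ω = σf v := h1
    refine ⟨?_, h1⟩
    show (12:ℝ)⁻¹ * Matrix.trace (Matrix.of (M ω))
        ≤ y ω ⬝ᵥ (Matrix.of (M ω)).mulVec (y ω)
    rw [hyω]
    exact h2
  -- lower bound on the sum of P (Bv v)
  have hBsum : ENNReal.ofReal ((2:ℝ)^n / 12) ≤ ∑ v : Fin n → Bool, P (Bv v) := by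
    have hkey : ∀ᵐ ω ∂P, ENNReal.ofReal ((2:ℝ)^n / 12)
        ≤ ∑ v : Fin n → Bool, (toMeasurable P (Bv v)).indicator (fun _ => (1:ENNReal)) ω := by
      filter_upwards [hPSD] with ω hω
      have hcount := cube_count hω
      set F := (Finset.univ : Finset (Fin n → Bool)).filter
        (fun v => (12:ℝ)⁻¹ * (Matrix.of (M ω)).trace ≤ Xq (Matrix.of (M ω)) v) with hFdef
      calc ENNReal.ofReal ((2:ℝ)^n / 12) ≤ (F.card : ENNReal) := by
            rw [← ENNReal.ofReal_natCast]
            exact ENNReal.ofReal_le_ofReal hcount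
        _ = ∑ v ∈ F, (1:ENNReal) := by simp
        _ ≤ ∑ v ∈ F, (toMeasurable P (Bv v)).indicator (fun _ => (1:ENNReal)) ω := by
            apply Finset.sum_le_sum
            intro v hv
            have hmem : ω ∈ Bv v := (Finset.mem_filter.mp hv).2
            rw [Set.indicator_of_mem (subset_toMeasurable P (Bv v) hmem)]
        _ ≤ ∑ v : Fin n → Bool, (toMeasurable P (Bv v)).indicator (fun _ => (1:ENNReal)) ω :=
            Finset.sum_le_sum_of_subset (Finset.subset_univ F)
    calc ENNReal.ofReal ((2:ℝ)^n / 12)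
        = ∫⁻ _, ENNReal.ofReal ((2:ℝ)^n / 12) ∂P := by
          rw [lintegral_const, measure_univ, mul_one]
      _ ≤ ∫⁻ ω, ∑ v : Fin n → Bool,
            (toMeasurable P (Bv v)).indicator (fun _ => (1:ENNReal)) ω ∂P :=
          lintegral_mono_ae hkey
      _ = ∑ v : Fin n → Bool, ∫⁻ ω,
            (toMeasurable P (Bv v)).indicator (fun _ => (1:ENNReal)) ω ∂P := by
          apply lintegral_finset_sum
          intro v _
          exact measurable_const.indicator (measurableSet_toMeasurable P (Bv v))
      _ = ∑ v : Fin n → Bool, P (toMeasurable P (Bv v)) := by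
          apply Finset.sum_congr rfl
          intro v _
          rw [lintegral_indicator (measurableSet_toMeasurable P (Bv v))]
          simp
      _ = ∑ v : Fin n → Bool, P (Bv v) := by
          exact Finset.sum_congr rfl fun v _ => measure_toMeasurable (Bv v)
  -- assemble
  have hchain : (2:ENNReal)⁻¹ ^ n * ENNReal.ofReal ((2:ℝ)^n / 12) ≤ P S := by
    calc (2:ENNReal)⁻¹ ^ n * ENNReal.ofReal ((2:ℝ)^n / 12)
        ≤ (2:ENNReal)⁻¹ ^ n * ∑ v : Fin n → Bool, P (Bv v) :=
          mul_le_mul_right hBsum _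
      _ = ∑ v : Fin n → Bool, (2:ENNReal)⁻¹ ^ n * P (Bv v) := by rw [Finset.mul_sum]
      _ = ∑ v : Fin n → Bool, P (Yv v ∩ Bv v) := by
          apply Finset.sum_congr rfl
          intro v _
          rw [hYB v, hPYv v]
      _ ≤ ∑ v : Fin n → Bool, P (S ∩ Yv v) := by
          apply Finset.sum_le_sum
          intro v _
          exact measure_mono (hsub v)
      _ ≤ P S := htotal
  have h2 : (2:ENNReal)⁻¹ ^ n * (2:ENNReal)^n = 1 := by
    rw [← mul_pow, ENNReal.inv_mul_cancel (by norm_num) (by norm_num), one_pow]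
  have harith : ENNReal.ofReal ((12:ℝ))⁻¹
      = (2:ENNReal)⁻¹ ^ n * ENNReal.ofReal ((2:ℝ)^n / 12) := by
    rw [div_eq_mul_inv, ENNReal.ofReal_mul (by positivity),
      ENNReal.ofReal_pow (by norm_num), ENNReal.ofReal_ofNat, ← mul_assoc, h2, one_mul]
  exact le_trans (le_of_eq harith) hchain
end

section
/- Fix X ∈ ℝ^{n×p} of the form X = Q + yμᵀ where Q ∈ ℝ^{n×p} has full row rank, y ∈ {-1,1}^n, μ ∈ ℝ^p. Let A = QQᵀ, ν = Qμ, and let μ_⊥ = (I_p − QᵀA⁻¹Q)μ be the projection of μ onto the orthogonal complement of the row space of Q. For clean labels (ŷ = y), the minimum-norm interpolator w_MNI = Xᵀ(XXᵀ)⁻¹y satisfies S·w_MNI = (1 + νᵀA⁻¹y)·QᵀA⁻¹y + (yᵀA⁻¹y)·μ_⊥ and S·μᵀw_MNI = (yᵀA⁻¹y)‖μ_⊥‖² + (1 + νᵀA⁻¹y)·νᵀA⁻¹y, where S = (1 + νᵀA⁻¹y)² + ‖μ_⊥‖²·(yᵀA⁻¹y). -/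
/-!
Put `a = A⁻¹y`, `b = A⁻¹ν`, `t = νᵀa = yᵀb` and `s = yᵀa`. The vector `z = (1 + t)a - s b`
satisfies `Xᵀz = (1 + t)Qᵀa + s μ_⊥` and `XXᵀz = S y`, because `Qμ_⊥ = 0` and
`μᵀμ_⊥ = ‖μ_⊥‖²`. If `S ≠ 0` then `XXᵀ` is invertible: a kernel vector `x` of `Xᵀ` satisfies
`x = -(yᵀx) b`, whence `(yᵀx)(1 + t) = 0` and `(yᵀx) μ_⊥ = 0`, which would force `S = 0`
unless `yᵀx = 0`. Hence `(XXᵀ)⁻¹y = z / S`. If `S = 0`, then `1 + t = 0` and `s μ_⊥ = 0`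
since `s = ‖Qᵀa‖² ≥ 0`, so both sides vanish. The second identity is the first one dotted
with `μ`.
-/

open Matrix

namespace Matrix

section Field

variable {m K : Type*} [Fintype m] [DecidableEq m] [Field K]

theorem isUnit_of_rank_eq_card {M : Matrix m m K} (h : M.rank = Fintype.card m) : IsUnit M :=
  linearIndependent_rows_iff_isUnit.1 <| linearIndependent_iff_card_eq_finrank_span.2 <|
    (M.rank_eq_finrank_span_row.symm.trans h).symm

theorem isUnit_of_mulVec_eq_zero {M : Matrix m m K} (h : ∀ x, M *ᵥ x = 0 → x = 0) :
    IsUnit M :=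
  mulVec_injective_iff_isUnit.1 fun x x' hxx' =>
    sub_eq_zero.1 <| h _ <| by rw [mulVec_sub, hxx', sub_self]

theorem inv_mulVec_eq_inv_smul {M : Matrix m m K} (hM : IsUnit M) {c : K} (hc : c ≠ 0)
    {y z : m → K} (h : M *ᵥ z = c • y) : M⁻¹ *ᵥ y = c⁻¹ • z := by
  have hdet := (isUnit_iff_isUnit_det M).1 hM
  rw [eq_inv_smul_iff₀ hc, ← mulVec_smul, ← h, mulVec_mulVec, nonsing_inv_mul _ hdet,
    one_mulVec]

end Field

section RankOneUpdate

variable {m n R : Type*} [CommRing R]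

theorem add_vecMulVec_mulVec [Fintype n] (Q : Matrix m n R) (y : m → R) (μ v : n → R) :
    (Q + vecMulVec y μ) *ᵥ v = Q *ᵥ v + (μ ⬝ᵥ v) • y := by
  rw [add_mulVec, vecMulVec_mulVec, op_smul_eq_smul]

theorem transpose_add_vecMulVec_mulVec [Fintype m] (Q : Matrix m n R) (y : m → R) (μ : n → R)
    (v : m → R) : (Q + vecMulVec y μ)ᵀ *ᵥ v = Qᵀ *ᵥ v + (y ⬝ᵥ v) • μ := by
  rw [transpose_add, transpose_vecMulVec, add_vecMulVec_mulVec]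

variable [Fintype m] [Fintype n] (Q : Matrix m n R) (y : m → R) (μ : n → R) {a b : m → R}

theorem dotProduct_eq_dotProduct_of_mulVec_transpose_mulVec
    (ha : Q *ᵥ (Qᵀ *ᵥ a) = y) (hb : Q *ᵥ (Qᵀ *ᵥ b) = Q *ᵥ μ) :
    y ⬝ᵥ b = Q *ᵥ μ ⬝ᵥ a := by
  rw [← ha, ← hb, dotProduct_comm, ← dotProduct_transpose_mulVec, dotProduct_comm,
    dotProduct_transpose_mulVec, dotProduct_comm]

theorem mulVec_sub_transpose_mulVec (hb : Q *ᵥ (Qᵀ *ᵥ b) = Q *ᵥ μ) :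
    Q *ᵥ (μ - Qᵀ *ᵥ b) = 0 := by
  rw [mulVec_sub, hb, sub_self]

theorem dotProduct_sub_transpose_mulVec_eq_dotProduct_self (hb : Q *ᵥ (Qᵀ *ᵥ b) = Q *ᵥ μ) :
    μ ⬝ᵥ (μ - Qᵀ *ᵥ b) = (μ - Qᵀ *ᵥ b) ⬝ᵥ (μ - Qᵀ *ᵥ b) := by
  rw [sub_dotProduct, dotProduct_comm (Qᵀ *ᵥ b), dotProduct_transpose_mulVec,
    mulVec_sub_transpose_mulVec Q μ hb, dotProduct_zero, sub_zero]

theorem transpose_add_vecMulVec_mulVec_smul_sub_smul (hab : y ⬝ᵥ b = Q *ᵥ μ ⬝ᵥ a) :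
    (Q + vecMulVec y μ)ᵀ *ᵥ ((1 + Q *ᵥ μ ⬝ᵥ a) • a - (y ⬝ᵥ a) • b)
      = (1 + Q *ᵥ μ ⬝ᵥ a) • Qᵀ *ᵥ a + (y ⬝ᵥ a) • (μ - Qᵀ *ᵥ b) := by
  rw [transpose_add_vecMulVec_mulVec, mulVec_sub, mulVec_smul, mulVec_smul, dotProduct_sub,
    dotProduct_smul, dotProduct_smul, hab, smul_eq_mul, smul_eq_mul]
  module

theorem add_vecMulVec_mulVec_smul_add_smul (ha : Q *ᵥ (Qᵀ *ᵥ a) = y)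
    (hb : Q *ᵥ (Qᵀ *ᵥ b) = Q *ᵥ μ) :
    (Q + vecMulVec y μ) *ᵥ ((1 + Q *ᵥ μ ⬝ᵥ a) • Qᵀ *ᵥ a + (y ⬝ᵥ a) • (μ - Qᵀ *ᵥ b))
      = ((1 + Q *ᵥ μ ⬝ᵥ a) ^ 2 + (μ - Qᵀ *ᵥ b) ⬝ᵥ (μ - Qᵀ *ᵥ b) * (y ⬝ᵥ a)) • y := by
  rw [add_vecMulVec_mulVec, mulVec_add, mulVec_smul, mulVec_smul, ha,
    mulVec_sub_transpose_mulVec Q μ hb, dotProduct_add, dotProduct_smul, dotProduct_smul,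
    dotProduct_transpose_mulVec, dotProduct_comm a,
    dotProduct_sub_transpose_mulVec_eq_dotProduct_self Q μ hb, smul_eq_mul, smul_eq_mul,
    smul_zero, add_zero]
  module

end RankOneUpdate

section LinearOrderedField

variable {m n K : Type*} [Fintype m] [Fintype n] [Field K] [LinearOrder K]
  [IsStrictOrderedRing K] {Q : Matrix m n K} {y : m → K} {μ : n → K} {a b : m → K}

theorem dotProduct_nonneg_of_mulVec_transpose_mulVec (ha : Q *ᵥ (Qᵀ *ᵥ a) = y) :
    0 ≤ y ⬝ᵥ a := by
  rw [← ha, dotProduct_comm, ← dotProduct_transpose_mulVec]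
  exact Finset.sum_nonneg fun i _ => mul_self_nonneg _

theorem eq_zero_and_smul_eq_zero_of_sq_add_dotProduct_self_mul_eq_zero {u s : K} {v : n → K}
    (hs : 0 ≤ s) (h : u ^ 2 + v ⬝ᵥ v * s = 0) : u = 0 ∧ s • v = 0 := by
  have hv : 0 ≤ v ⬝ᵥ v := Finset.sum_nonneg fun i _ => mul_self_nonneg _
  obtain ⟨hu, hvs⟩ := (add_eq_zero_iff_of_nonneg (sq_nonneg u) (mul_nonneg hv hs)).1 h
  refine ⟨pow_eq_zero_iff two_ne_zero |>.1 hu, ?_⟩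
  rcases mul_eq_zero.1 hvs with hv0 | hs0
  · rw [dotProduct_self_eq_zero.1 hv0, smul_zero]
  · rw [hs0, zero_smul]

theorem isUnit_mul_transpose_add_vecMulVec [DecidableEq m] (hQ : IsUnit (Q * Qᵀ))
    (hb : Q *ᵥ (Qᵀ *ᵥ b) = Q *ᵥ μ) (h : 1 + y ⬝ᵥ b ≠ 0 ∨ μ - Qᵀ *ᵥ b ≠ 0) :
    IsUnit ((Q + vecMulVec y μ) * (Q + vecMulVec y μ)ᵀ) := by
  set X := Q + vecMulVec y μ
  refine isUnit_of_mulVec_eq_zero fun x hx => ?_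
  have hXx : Xᵀ *ᵥ x = 0 := by
    have h := SetLike.ext_iff.1 (ker_mulVecLin_transpose_mul_self Xᵀ) x
    rw [LinearMap.mem_ker, LinearMap.mem_ker, mulVecLin_apply, mulVecLin_apply,
      transpose_transpose] at h
    exact h.1 hx
  rw [transpose_add_vecMulVec_mulVec] at hXx
  set k := y ⬝ᵥ x
  have hxb : x + k • b = 0 := by
    refine mulVec_injective_iff_isUnit.2 hQ ?_
    rw [mulVec_zero, mulVec_add, mulVec_smul, ← mulVec_mulVec, ← mulVec_mulVec, hb,
      ← mulVec_smul, ← mulVec_add, hXx, mulVec_zero]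
  have hQxb : Qᵀ *ᵥ x + k • Qᵀ *ᵥ b = 0 := by
    rw [← mulVec_smul, ← mulVec_add, hxb, mulVec_zero]
  have hkmp : k • (μ - Qᵀ *ᵥ b) = 0 := by
    linear_combination (norm := module) hXx - hQxb
  have hkt : k * (1 + y ⬝ᵥ b) = 0 := by
    have hyxb := congrArg (y ⬝ᵥ ·) hxb
    simp only [dotProduct_add, dotProduct_smul, dotProduct_zero, smul_eq_mul] at hyxb
    linear_combination hyxb
  have hk : k = 0 := by
    rcases h with h | h
    · exact (mul_eq_zero.1 hkt).resolve_right h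
    · exact (smul_eq_zero.1 hkmp).resolve_right h
  rwa [hk, zero_smul, add_zero] at hxb

theorem smul_transpose_mulVec_inv_mulVec_eq [DecidableEq m] (hQ : IsUnit (Q * Qᵀ))
    (ha : Q *ᵥ (Qᵀ *ᵥ a) = y) (hb : Q *ᵥ (Qᵀ *ᵥ b) = Q *ᵥ μ) :
    ((1 + Q *ᵥ μ ⬝ᵥ a) ^ 2 + (μ - Qᵀ *ᵥ b) ⬝ᵥ (μ - Qᵀ *ᵥ b) * (y ⬝ᵥ a)) •
        (Q + vecMulVec y μ)ᵀ *ᵥ (((Q + vecMulVec y μ) * (Q + vecMulVec y μ)ᵀ)⁻¹ *ᵥ y)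
      = (1 + Q *ᵥ μ ⬝ᵥ a) • Qᵀ *ᵥ a + (y ⬝ᵥ a) • (μ - Qᵀ *ᵥ b) := by
  have hab := dotProduct_eq_dotProduct_of_mulVec_transpose_mulVec Q y μ ha hb
  set S := (1 + Q *ᵥ μ ⬝ᵥ a) ^ 2 + (μ - Qᵀ *ᵥ b) ⬝ᵥ (μ - Qᵀ *ᵥ b) * (y ⬝ᵥ a)
  by_cases hS : S = 0
  · obtain ⟨ht, hs⟩ := eq_zero_and_smul_eq_zero_of_sq_add_dotProduct_self_mul_eq_zero
      (dotProduct_nonneg_of_mulVec_transpose_mulVec ha) hS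
    rw [hS, zero_smul, ht, zero_smul, zero_add, hs]
  · have hX := isUnit_mul_transpose_add_vecMulVec (y := y) hQ hb <|
      not_and_or.1 fun ⟨ht, hmp⟩ => hS (by simp [S, ← hab, ht, hmp])
    have hz := inv_mulVec_eq_inv_smul hX hS <| by
      rw [← mulVec_mulVec, transpose_add_vecMulVec_mulVec_smul_sub_smul Q y μ hab,
        add_vecMulVec_mulVec_smul_add_smul Q y μ ha hb]
    rw [hz, mulVec_smul, transpose_add_vecMulVec_mulVec_smul_sub_smul Q y μ hab,
      smul_inv_smul₀ hS]

end LinearOrderedField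

end Matrix

theorem stmt_13_general {n p : ℕ} (Q : Matrix (Fin n) (Fin p) ℝ) (hQ : Q.rank = n)
    (y : Fin n → ℝ)
    (μ : Fin p → ℝ)
    (X : Matrix (Fin n) (Fin p) ℝ) (hX : X = Q + Matrix.vecMulVec y μ)
    (A : Matrix (Fin n) (Fin n) ℝ) (hA : A = Q * Qᵀ)
    (ν : Fin n → ℝ) (hν : ν = Q.mulVec μ)
    (mp : Fin p → ℝ) (hmp : mp = μ - Qᵀ.mulVec (A⁻¹.mulVec (Q.mulVec μ)))
    (S : ℝ)
    (hS : S = (1 + ν ⬝ᵥ A⁻¹.mulVec y) ^ 2 + (mp ⬝ᵥ mp) * (y ⬝ᵥ A⁻¹.mulVec y))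
    (w : Fin p → ℝ) (hw : w = Xᵀ.mulVec ((X * Xᵀ)⁻¹.mulVec y)) :
    S • w = (1 + ν ⬝ᵥ A⁻¹.mulVec y) • Qᵀ.mulVec (A⁻¹.mulVec y)
            + (y ⬝ᵥ A⁻¹.mulVec y) • mp
    ∧ S * (μ ⬝ᵥ w) = (y ⬝ᵥ A⁻¹.mulVec y) * (mp ⬝ᵥ mp)
        + (1 + ν ⬝ᵥ A⁻¹.mulVec y) * (ν ⬝ᵥ A⁻¹.mulVec y) := by
  subst hX hA hν hmp hS hw
  have hA : IsUnit (Q * Qᵀ) :=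
    isUnit_of_rank_eq_card (by rw [rank_self_mul_transpose, hQ, Fintype.card_fin])
  have hAinv (v : Fin n → ℝ) : Q *ᵥ (Qᵀ *ᵥ ((Q * Qᵀ)⁻¹ *ᵥ v)) = v := by
    rw [mulVec_mulVec, mulVec_mulVec, mul_nonsing_inv _ ((isUnit_iff_isUnit_det _).1 hA),
      one_mulVec]
  have hb := hAinv (Q *ᵥ μ)
  have hw := smul_transpose_mulVec_inv_mulVec_eq hA (hAinv y) hb
  refine ⟨hw, ?_⟩
  rw [← smul_eq_mul, ← dotProduct_smul, hw, dotProduct_add, dotProduct_smul, dotProduct_smul,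
    dotProduct_transpose_mulVec, dotProduct_comm _ (Q *ᵥ μ),
    dotProduct_sub_transpose_mulVec_eq_dotProduct_self Q μ hb, smul_eq_mul, smul_eq_mul]
  ring

theorem stmt_13 {n p : ℕ} (Q : Matrix (Fin n) (Fin p) ℝ) (hQ : Q.rank = n)
    (y : Fin n → ℝ) (hy : ∀ i, y i = 1 ∨ y i = -1)
    (μ : Fin p → ℝ)
    (X : Matrix (Fin n) (Fin p) ℝ) (hX : X = Q + Matrix.vecMulVec y μ)
    (A : Matrix (Fin n) (Fin n) ℝ) (hA : A = Q * Qᵀ)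
    (ν : Fin n → ℝ) (hν : ν = Q.mulVec μ)
    (mp : Fin p → ℝ) (hmp : mp = μ - Qᵀ.mulVec (A⁻¹.mulVec (Q.mulVec μ)))
    (S : ℝ)
    (hS : S = (1 + ν ⬝ᵥ A⁻¹.mulVec y) ^ 2 + (mp ⬝ᵥ mp) * (y ⬝ᵥ A⁻¹.mulVec y))
    (w : Fin p → ℝ) (hw : w = Xᵀ.mulVec ((X * Xᵀ)⁻¹.mulVec y)) :
    S • w = (1 + ν ⬝ᵥ A⁻¹.mulVec y) • Qᵀ.mulVec (A⁻¹.mulVec y)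
            + (y ⬝ᵥ A⁻¹.mulVec y) • mp
    ∧ S * (μ ⬝ᵥ w) = (y ⬝ᵥ A⁻¹.mulVec y) * (mp ⬝ᵥ mp)
        + (1 + ν ⬝ᵥ A⁻¹.mulVec y) * (ν ⬝ᵥ A⁻¹.mulVec y) :=
  stmt_13_general Q hQ y μ X hX A hA ν hν mp hmp S hS w hw
end

section
/- Let k ≤ n/2 and suppose Λ := λ + Σ_{i>k} λ_i > n λ_{k+1} where λ_1 ≥ ... ≥ λ_p > 0 and λ ≥ 0. Define k* = min{κ ∈ {0,...,k} : λ + Σ_{i>κ} λ_i ≥ n λ_{κ+1}} and Λ* = λ + Σ_{i>k*} λ_i. Then Λ ≤ Λ* ≤ 2Λ; moreover λ_i ≥ Λ*/n for all i ≤ k* and λ_i ≤ Λ*/n for all i > k*. -/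
open Matrix Finset

theorem stmt_17 (n p k : ℕ) (hn : 0 < n) (hk2 : 2 * k ≤ n) (hkp : k < p)
    (lam : Fin p → ℝ) (hpos : ∀ i, 0 < lam i)
    (hmono : ∀ i j : Fin p, i ≤ j → lam j ≤ lam i)
    (lam0 : ℝ) (hlam0 : 0 ≤ lam0)
    (tail : ℕ → ℝ)
    (htail : ∀ κ, tail κ = lam0 + ∑ i ∈ univ.filter (fun i : Fin p => κ ≤ i.val), lam i)
    (hΛ : (n : ℝ) * lam ⟨k, hkp⟩ < tail k)
    (kstar : ℕ)
    (hkstar : kstar = sInf {κ : ℕ | ∃ h : κ < p, κ ≤ k ∧ (n : ℝ) * lam ⟨κ, h⟩ ≤ tail κ}) :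
    tail k ≤ tail kstar ∧ tail kstar ≤ 2 * tail k
    ∧ (∀ i : Fin p, i.val < kstar → tail kstar / n ≤ lam i)
    ∧ (∀ i : Fin p, kstar ≤ i.val → lam i ≤ tail kstar / n) := by
  set S : Set ℕ := {κ : ℕ | ∃ h : κ < p, κ ≤ k ∧ (n : ℝ) * lam ⟨κ, h⟩ ≤ tail κ} with hS
  have hkS : k ∈ S := ⟨hkp, le_refl k, le_of_lt hΛ⟩
  have hne : S.Nonempty := ⟨k, hkS⟩
  have hmem : kstar ∈ S := hkstar ▸ Nat.sInf_mem hne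
  obtain ⟨hksp, hksk, hksle⟩ := hmem
  -- tail is antitone
  have hanti : ∀ a b : ℕ, a ≤ b → tail b ≤ tail a := by
    intro a b hab
    rw [htail a, htail b]
    apply add_le_add (le_refl _)
    apply Finset.sum_le_sum_of_subset_of_nonneg
    · intro i hi
      simp only [Finset.mem_filter, Finset.mem_univ, true_and] at hi ⊢
      omega
    · intro i _ _; exact (hpos i).le
  have h1 : tail k ≤ tail kstar := hanti kstar k hksk
  have htks0 : 0 ≤ tail kstar := by
    rw [htail]
    exact add_nonneg hlam0 (Finset.sum_nonneg fun i _ => (hpos i).le)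
  -- lower bound part
  have hlow : ∀ i : Fin p, i.val < kstar → tail kstar / n ≤ lam i := by
    intro i hi
    have hnotS : i.val ∉ S := by
      rw [hkstar] at hi
      exact Nat.notMem_of_lt_sInf hi
    have hik : i.val ≤ k := by omega
    have hgt : tail i.val < (n : ℝ) * lam i := by
      by_contra hcon
      push_neg at hcon
      exact hnotS ⟨i.isLt, hik, by simpa using hcon⟩
    have : tail kstar ≤ tail i.val := hanti i.val kstar (by omega)
    rw [div_le_iff₀ (by exact_mod_cast hn)]
    nlinarith
  -- upper bound part
  have hhigh : ∀ i : Fin p, kstar ≤ i.val → lam i ≤ tail kstar / n := by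
    intro i hi
    have hm : lam i ≤ lam ⟨kstar, hksp⟩ := hmono ⟨kstar, hksp⟩ i hi
    rw [le_div_iff₀ (by exact_mod_cast hn)]
    nlinarith
  -- split sum
  have hsplit : tail kstar = tail k +
      ∑ i ∈ univ.filter (fun i : Fin p => kstar ≤ i.val ∧ i.val < k), lam i := by
    rw [htail kstar, htail k]
    have hu : univ.filter (fun i : Fin p => kstar ≤ i.val) =
        univ.filter (fun i : Fin p => k ≤ i.val) ∪
        univ.filter (fun i : Fin p => kstar ≤ i.val ∧ i.val < k) := by
      ext i
      simp only [Finset.mem_filter, Finset.mem_univ, true_and, Finset.mem_union]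
      omega
    have hdisj : Disjoint (univ.filter (fun i : Fin p => k ≤ i.val))
        (univ.filter (fun i : Fin p => kstar ≤ i.val ∧ i.val < k)) := by
      rw [Finset.disjoint_left]
      intro i hi hi'
      simp only [Finset.mem_filter, Finset.mem_univ, true_and] at hi hi'
      omega
    rw [hu, Finset.sum_union hdisj]
    ring
  -- cardinality bound
  have hcard : (univ.filter (fun i : Fin p => kstar ≤ i.val ∧ i.val < k)).card ≤ k - kstar := by
    have := Finset.card_le_card_of_injOn (fun i : Fin p => i.val)
      (s := univ.filter (fun i : Fin p => kstar ≤ i.val ∧ i.val < k))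
      (t := Finset.Ico kstar k)
      (by intro i hi
          simp only [Finset.mem_coe, Finset.mem_filter, Finset.mem_univ, true_and] at hi
          simp only [Finset.mem_coe, Finset.mem_Ico]
          omega)
      (fun a _ b _ h => Fin.val_injective h)
    simpa [Nat.card_Ico] using this
  have hsum : ∑ i ∈ univ.filter (fun i : Fin p => kstar ≤ i.val ∧ i.val < k), lam i
      ≤ (k : ℝ) * (tail kstar / n) := by
    calc ∑ i ∈ univ.filter (fun i : Fin p => kstar ≤ i.val ∧ i.val < k), lam i
        ≤ (univ.filter (fun i : Fin p => kstar ≤ i.val ∧ i.val < k)).card • (tail kstar / n) := by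
          apply Finset.sum_le_card_nsmul
          intro i hi
          simp only [Finset.mem_filter, Finset.mem_univ, true_and] at hi
          exact hhigh i hi.1
      _ ≤ (k : ℝ) * (tail kstar / n) := by
          rw [nsmul_eq_mul]
          apply mul_le_mul_of_nonneg_right _ (by positivity)
          exact_mod_cast le_trans hcard (Nat.sub_le k kstar)
  have h2 : tail kstar ≤ 2 * tail k := by
    have hkn : 2 * (k : ℝ) ≤ (n : ℝ) := by exact_mod_cast hk2
    have hn' : (0 : ℝ) < n := by exact_mod_cast hn
    have : (k : ℝ) * (tail kstar / n) ≤ tail kstar / 2 := by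
      rw [← mul_div_assoc, div_le_div_iff₀ hn' (by norm_num : (0:ℝ) < 2)]
      nlinarith
    linarith [hsplit, hsum]
  exact ⟨h1, h2, hlow, hhigh⟩
end

section
/- Let k < n and Λ = λ + Σ_{i>k} λ_i > n λ_{k+1}, with λ_1 ≥ ... ≥ λ_p > 0 diagonal covariance entries and μ ∈ ℝ^p. Define N = ‖(Λn⁻¹Σ_{0:k}⁻¹ + I_k)^{-1/2} Σ_{0:k}^{-1/2} μ_{0:k}‖² + nΛ⁻¹‖μ_{k:∞}‖² and N_a = Σ_{i=1}^p μ_i²/(λ_i + Λ/n). Then N_a ≤ N ≤ 2·N_a. Similarly, with V = n⁻¹tr((Λn⁻¹Σ_{0:k}⁻¹+I_k)⁻²) + Λ⁻²nΣ_{i>k}λ_i² and V_a = Σ_{i=1}^p (λ_i²/n)/(λ_i + Λ/n)², one has V_a ≤ V ≤ 4·V_a; and with Diamond² = n⁻¹‖(Λn⁻¹Σ_{0:k}⁻¹+I_k)⁻¹Σ_{0:k}^{-1/2}μ_{0:k}‖² + nΛ⁻²‖μ_{k:∞}‖²_{Σ_{k:∞}} and Diamond_a² = Σ_{i=1}^p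 (λ_i μ_i²/n)/(λ_i + Λ/n)², one has Diamond_a² ≤ Diamond² ≤ 4·Diamond_a². -/
open Matrix Finset

lemma stmt18_bnd1 (x l A : ℝ) (hx : 0 ≤ x) (hl : 0 < l) (hA : 0 < A) (hlA : l ≤ A) :
    x / (l + A) ≤ x / A ∧ x / A ≤ 2 * (x / (l + A)) := by
  constructor
  · gcongr; linarith
  · rw [mul_div_assoc' 2 x (l + A), div_le_div_iff₀ hA (by linarith)]
    nlinarith [mul_nonneg hx hl.le, mul_nonneg hx hA.le]

lemma stmt18_bnd2 (x l A : ℝ) (hx : 0 ≤ x) (hl : 0 < l) (hA : 0 < A) (hlA : l ≤ A) :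
    x / (l + A) ^ 2 ≤ x / A ^ 2 ∧ x / A ^ 2 ≤ 4 * (x / (l + A) ^ 2) := by
  constructor
  · gcongr <;> linarith
  · rw [mul_div_assoc' 4 x ((l + A) ^ 2), div_le_div_iff₀ (by positivity) (by positivity)]
    nlinarith [mul_nonneg hx hl.le, mul_nonneg hx hA.le, mul_nonneg (mul_nonneg hx hl.le) hA.le,
      mul_nonneg (mul_nonneg hx hl.le) hl.le, mul_nonneg (mul_nonneg hx hA.le) hA.le]

lemma stmt18_combine (S1 S2 T Na N c : ℝ) (h1 : 0 ≤ S1) (h2 : S2 ≤ T) (h3 : T ≤ c * S2)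
    (hc : 1 ≤ c) (hS2 : 0 ≤ S2) (hNa : Na = S1 + S2) (hN : N = S1 + T) :
    Na ≤ N ∧ N ≤ c * Na := by
  constructor <;> nlinarith

theorem stmt_18 (n p k : ℕ) (hn : 0 < n) (hkn : k < n) (hkp : k < p)
    (lam : Fin p → ℝ) (hpos : ∀ i, 0 < lam i)
    (hmono : ∀ i j : Fin p, i ≤ j → lam j ≤ lam i)
    (μ : Fin p → ℝ) (lam0 : ℝ) (hlam0 : 0 ≤ lam0) (Λ : ℝ)
    (hΛ : Λ = lam0 + ∑ i ∈ univ.filter (fun i : Fin p => k ≤ i.val), lam i)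
    (h1 : (n : ℝ) * lam ⟨k, hkp⟩ < Λ)
    (N Na V Va D2 Da2 : ℝ)
    (hN : N = ∑ i ∈ univ.filter (fun i : Fin p => i.val < k), μ i ^ 2 / (lam i + Λ / n)
            + n / Λ * ∑ i ∈ univ.filter (fun i : Fin p => k ≤ i.val), μ i ^ 2)
    (hNa : Na = ∑ i, μ i ^ 2 / (lam i + Λ / n))
    (hV : V = ∑ i ∈ univ.filter (fun i : Fin p => i.val < k),
              (lam i ^ 2 / n) / (lam i + Λ / n) ^ 2
            + n / Λ ^ 2 * ∑ i ∈ univ.filter (fun i : Fin p => k ≤ i.val), lam i ^ 2)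
    (hVa : Va = ∑ i, (lam i ^ 2 / n) / (lam i + Λ / n) ^ 2)
    (hD : D2 = ∑ i ∈ univ.filter (fun i : Fin p => i.val < k),
              (lam i * μ i ^ 2 / n) / (lam i + Λ / n) ^ 2
            + n / Λ ^ 2 * ∑ i ∈ univ.filter (fun i : Fin p => k ≤ i.val), lam i * μ i ^ 2)
    (hDa : Da2 = ∑ i, (lam i * μ i ^ 2 / n) / (lam i + Λ / n) ^ 2) :
    (Na ≤ N ∧ N ≤ 2 * Na) ∧ (Va ≤ V ∧ V ≤ 4 * Va) ∧ (Da2 ≤ D2 ∧ D2 ≤ 4 * Da2) := by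
  have hn' : (0 : ℝ) < n := by exact_mod_cast hn
  have hΛ0 : 0 < Λ := lt_trans (mul_pos hn' (hpos ⟨k, hkp⟩)) h1
  have hA : 0 < Λ / n := div_pos hΛ0 hn'
  have htail : ∀ i : Fin p, k ≤ i.val → lam i ≤ Λ / n := by
    intro i hi
    have h2 : lam i ≤ lam ⟨k, hkp⟩ := hmono ⟨k, hkp⟩ i hi
    have h3 : lam ⟨k, hkp⟩ < Λ / n := (lt_div_iff₀ hn').mpr (by linarith [mul_comm (lam ⟨k, hkp⟩) (n : ℝ)])
    linarith
  have split : ∀ f : Fin p → ℝ, ∑ i, f i =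
      (∑ i ∈ univ.filter (fun i : Fin p => i.val < k), f i)
      + ∑ i ∈ univ.filter (fun i : Fin p => k ≤ i.val), f i := by
    intro f
    rw [← Finset.sum_filter_add_sum_filter_not univ (fun i : Fin p => i.val < k) f]
    congr 1
    apply Finset.sum_congr _ (fun _ _ => rfl)
    ext i; simp [not_lt]
  -- rewrite tail coefficients as divisions by A = Λ/n
  have hAeq : ∀ x : ℝ, (n : ℝ) / Λ * x = x / (Λ / n) := by
    intro x; field_simp
  have hAeq2 : ∀ x : ℝ, (n : ℝ) / Λ ^ 2 * x = (x / n) / (Λ / n) ^ 2 := by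
    intro x; field_simp
  have memf : ∀ i : Fin p, i ∈ univ.filter (fun i : Fin p => k ≤ i.val) → k ≤ i.val := by
    intro i hi; simpa using hi
  refine ⟨?_, ?_, ?_⟩
  · -- N
    apply stmt18_combine _ (∑ i ∈ univ.filter (fun i : Fin p => k ≤ i.val), μ i ^ 2 / (lam i + Λ / n))
      ((n : ℝ) / Λ * ∑ i ∈ univ.filter (fun i : Fin p => k ≤ i.val), μ i ^ 2) _ _ _
      (Finset.sum_nonneg fun i _ => div_nonneg (sq_nonneg _) (by have := hpos i; linarith))
      ?_ ?_ one_le_two (Finset.sum_nonneg fun i _ => div_nonneg (sq_nonneg _) (by have := hpos i; linarith))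
      (by rw [hNa, split]) hN
    · rw [Finset.mul_sum]
      apply Finset.sum_le_sum
      intro i hi
      rw [hAeq]
      exact (stmt18_bnd1 _ _ _ (by positivity) (hpos i) hA (htail i (memf i hi))).1
    · rw [Finset.mul_sum, Finset.mul_sum]
      apply Finset.sum_le_sum
      intro i hi
      rw [hAeq]
      exact (stmt18_bnd1 _ _ _ (by positivity) (hpos i) hA (htail i (memf i hi))).2
  · -- V
    apply stmt18_combine _ (∑ i ∈ univ.filter (fun i : Fin p => k ≤ i.val), (lam i ^ 2 / n) / (lam i + Λ / n) ^ 2)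
      ((n : ℝ) / Λ ^ 2 * ∑ i ∈ univ.filter (fun i : Fin p => k ≤ i.val), lam i ^ 2) _ _ _
      (Finset.sum_nonneg fun i _ => div_nonneg (by positivity) (sq_nonneg _))
      ?_ ?_ (by norm_num) (Finset.sum_nonneg fun i _ => div_nonneg (by positivity) (sq_nonneg _))
      (by rw [hVa, split]) hV
    · rw [Finset.mul_sum]
      apply Finset.sum_le_sum
      intro i hi
      rw [hAeq2]
      exact (stmt18_bnd2 _ _ _ (by positivity) (hpos i) hA (htail i (memf i hi))).1
    · rw [Finset.mul_sum, Finset.mul_sum]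
      apply Finset.sum_le_sum
      intro i hi
      rw [hAeq2]
      exact (stmt18_bnd2 _ _ _ (by positivity) (hpos i) hA (htail i (memf i hi))).2
  · -- D
    apply stmt18_combine _ (∑ i ∈ univ.filter (fun i : Fin p => k ≤ i.val), (lam i * μ i ^ 2 / n) / (lam i + Λ / n) ^ 2)
      ((n : ℝ) / Λ ^ 2 * ∑ i ∈ univ.filter (fun i : Fin p => k ≤ i.val), lam i * μ i ^ 2) _ _ _
      (Finset.sum_nonneg fun i _ => by have := hpos i; positivity)
      ?_ ?_ (by norm_num) (Finset.sum_nonneg fun i _ => by have := hpos i; positivity)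
      (by rw [hDa, split]) hD
    · rw [Finset.mul_sum]
      apply Finset.sum_le_sum
      intro i hi
      rw [hAeq2]
      exact (stmt18_bnd2 _ _ _ (by have := hpos i; positivity) (hpos i) hA (htail i (memf i hi))).1
    · rw [Finset.mul_sum, Finset.mul_sum]
      apply Finset.sum_le_sum
      intro i hi
      rw [hAeq2]
      exact (stmt18_bnd2 _ _ _ (by have := hpos i; positivity) (hpos i) hA (htail i (memf i hi))).2
end
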